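/- arXiv:1209.1768 — 9 statements merged into one kernel-verified Lean document; each statement's English description precedes it below -/
import Mathlib

section
/- Let G be a finite group with subgroups A and B where A is abelian and B ≤ N_G(A). Let F be an algebraically closed field of characteristic ℓ, with ℓ = 0 or ℓ coprime to |A|, and let M be an FG-module. For a linear F-character α of A set M_α = {m ∈ M : a·m = α(a)·m for all a ∈ A}. Suppose M_α ≠ 0 and the stabilizer C = Stab_B(α) has a common eigenvector v ∈ M_α with c·v = γ(c)·v for all c ∈ C, for some linear F-character γ of C. Then M restricted to B contains a submodule isomorphic to the induced module Ind_C^B(γ). In particular, if C = 1 then M|_B contains a copy of the regular FB-module. -/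
open scoped Classical BigOperators

/-- The induced module `Ind_C^B(γ)`, modelled as the space of functions `f : G → F`
supported on `B` satisfying `f (c * x) = γ c * f x` for `c ∈ C`, with `B` acting by
right translation. -/
def indSubmodule (F : Type) [Field F] (G : Type) [Group G] (B C : Subgroup G)
    (γ : G → F) : Submodule F (G → F) where
  carrier := {f | (∀ x : G, x ∉ B → f x = 0) ∧ ∀ c ∈ C, ∀ x : G, f (c * x) = γ c * f x}
  add_mem' := by
    rintro f g ⟨hf1, hf2⟩ ⟨hg1, hg2⟩
    refine ⟨fun x hx => ?_, fun c hc x => ?_⟩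
    · simp [Pi.add_apply, hf1 x hx, hg1 x hx]
    · simp only [Pi.add_apply, hf2 c hc x, hg2 c hc x]; ring
  zero_mem' := ⟨fun x _ => rfl, fun c hc x => by simp⟩
  smul_mem' := by
    rintro a f ⟨hf1, hf2⟩
    refine ⟨fun x hx => ?_, fun c hc x => ?_⟩
    · simp [hf1 x hx]
    · simp only [Pi.smul_apply, smul_eq_mul, hf2 c hc x]; ring

/-- Key independence lemma: a simultaneous `A`-eigenvector `v0` that sums to zero with
finitely many simultaneous eigenvectors whose characters each differ from that of `v0`
must be zero. -/
lemma aux_indep {F M G : Type} [Field F] [AddCommGroup M] [Module F M] [Group G]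
    (ρ : Representation F G M) (A : Subgroup G) {ι : Type}
    (s : Finset ι) :
    ∀ (β : ι → G → F) (w : ι → M) (v0 : M) (β0 : G → F),
      (∀ a ∈ A, ρ a v0 = β0 a • v0) →
      (∀ j ∈ s, ∀ a ∈ A, ρ a (w j) = β j a • w j) →
      (∀ j ∈ s, ∃ a ∈ A, β0 a ≠ β j a) →
      v0 + ∑ j ∈ s, w j = 0 → v0 = 0 := by
  induction s using Finset.induction_on with
  | empty =>
    intro β w v0 β0 _ _ _ hsum
    simpa using hsum
  | @insert j u hj IH =>
    intro β w v0 β0 h0 hw hsep hsum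
    obtain ⟨a, ha, hne⟩ := hsep j (Finset.mem_insert_self j u)
    set L : M →ₗ[F] M := ρ a - β j a • LinearMap.id with hL
    have hLv0 : L v0 = (β0 a - β j a) • v0 := by
      simp [hL, h0 a ha, sub_smul, LinearMap.sub_apply]
    have hLwj : L (w j) = 0 := by
      simp [hL, hw j (Finset.mem_insert_self j u) a ha, LinearMap.sub_apply]
    have hLwk : ∀ k ∈ u, L (w k) = (β k a - β j a) • w k := by
      intro k hk
      simp [hL, hw k (Finset.mem_insert_of_mem hk) a ha, sub_smul, LinearMap.sub_apply]
    have key : (β0 a - β j a) • v0 = 0 := by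
      refine IH β (fun k => (β k a - β j a) • w k) ((β0 a - β j a) • v0) β0
        ?_ ?_ ?_ ?_
      · intro a' ha'
        rw [map_smul, h0 a' ha', smul_comm]
      · intro k hk a' ha'
        rw [map_smul, hw k (Finset.mem_insert_of_mem hk) a' ha', smul_comm]
      · intro k hk
        exact hsep k (Finset.mem_insert_of_mem hk)
      · have h2 := congrArg L hsum
        simp only [map_add, map_sum, Finset.sum_insert hj, hLwj, hLv0, map_zero,
          zero_add] at h2
        rw [Finset.sum_congr rfl hLwk] at h2
        simpa using h2
    rcases smul_eq_zero.mp key with h | h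
    · exact absurd (sub_eq_zero.mp h) hne
    · exact h

/-- Let `G` be a finite group with subgroups `A`, `B`, where `A` is abelian
and `B ≤ N_G(A)`.  Let `F` be an algebraically closed field of characteristic `0` or
coprime to `|A|`, and `M` an `FG`-module.  Suppose the eigenspace `M_α` of a linear
`F`-character `α` of `A` is nonzero, and the common eigenvector `v ∈ M_α` of the
stabilizer `C = Stab_B(α)` affords the linear character `γ` of `C`.  Then `M|_B`
contains a submodule isomorphic to the induced module `Ind_C^B(γ)`. -/
theorem stmt_1 {G : Type} [Group G] [Fintype G]
    (F : Type) [Field F] [IsAlgClosed F]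
    (A B : Subgroup G)
    (hA : ∀ a ∈ A, ∀ b ∈ A, a * b = b * a)
    (hB : B ≤ Subgroup.normalizer (A : Set G))
    (hchar : ringChar F = 0 ∨ Nat.Coprime (ringChar F) (Nat.card A))
    (M : Type) [AddCommGroup M] [Module F M] [FiniteDimensional F M]
    (ρ : Representation F G M)
    (α : G → F) (hα1 : α 1 = 1)
    (hαmul : ∀ a ∈ A, ∀ b ∈ A, α (a * b) = α a * α b)
    (C : Subgroup G)
    (hC : ∀ b : G, b ∈ C ↔ b ∈ B ∧ ∀ a ∈ A, α (b⁻¹ * a * b) = α a)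
    (γ : G → F) (hγ1 : γ 1 = 1)
    (hγmul : ∀ c ∈ C, ∀ c' ∈ C, γ (c * c') = γ c * γ c')
    (v : M) (hv : v ≠ 0)
    (hvα : ∀ a ∈ A, ρ a v = α a • v)
    (hvγ : ∀ c ∈ C, ρ c v = γ c • v) :
    ∃ Φ : ↥(indSubmodule F G B C γ) →ₗ[F] M,
      Function.Injective Φ ∧
      ∀ b ∈ B, ∀ f g : ↥(indSubmodule F G B C γ),
        (∀ x : G, (g : G → F) x = (f : G → F) (x * b)) →
        Φ g = ρ b (Φ f) := by
  classical
  have hγinv : ∀ c ∈ C, γ c * γ c⁻¹ = 1 := by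
    intro c hc
    rw [← hγmul c hc c⁻¹ (inv_mem hc), mul_inv_cancel, hγ1]
  -- apply `ρ (x * y)` as composition
  have hmul : ∀ (x y : G) (m : M), ρ (x * y) m = ρ x (ρ y m) := by
    intro x y m; rw [map_mul]; rfl
  have hρv : ∀ x : G, ρ x v ≠ 0 := by
    intro x h
    apply hv
    have h2 := congrArg (ρ x⁻¹) h
    rw [map_zero, ← hmul, inv_mul_cancel, map_one, Module.End.one_apply] at h2
    exact h2
  set t : Quotient (QuotientGroup.rightRel C) → G := fun q => Quotient.out q with ht
  set Φ : ↥(indSubmodule F G B C γ) →ₗ[F] M :=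
    { toFun := fun f => ∑ q : Quotient (QuotientGroup.rightRel C),
        (f : G → F) (t q) • ρ (t q)⁻¹ v
      map_add' := by
        intro f g
        simp [add_smul, Finset.sum_add_distrib]
      map_smul' := by
        intro c f
        simp [smul_smul, Finset.smul_sum] } with hΦ
  have hΦapp : ∀ f : ↥(indSubmodule F G B C γ),
      Φ f = ∑ q : Quotient (QuotientGroup.rightRel C),
        (f : G → F) (t q) • ρ (t q)⁻¹ v := fun _ => rfl
  have hker : ∀ f : ↥(indSubmodule F G B C γ), Φ f = 0 → f = 0 := by
    intro f hf
    obtain ⟨hf1, hf2⟩ := f.2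
    set w : Quotient (QuotientGroup.rightRel C) → M :=
      fun q => (f : G → F) (t q) • ρ (t q)⁻¹ v with hw
    have hsum : ∑ q, w q = 0 := by rw [← hΦapp f]; exact hf
    set s : Finset (Quotient (QuotientGroup.rightRel C)) :=
      Finset.univ.filter (fun q => t q ∈ B) with hs
    have hsum' : ∑ q ∈ s, w q = 0 := by
      rw [← hsum]
      apply Finset.sum_subset (Finset.subset_univ s)
      intro q _ hq
      have hqB : t q ∉ B := by simpa [hs] using hq
      simp [hw, hf1 (t q) hqB]
    set β : Quotient (QuotientGroup.rightRel C) → G → F :=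
      fun q a => α (t q * a * (t q)⁻¹) with hβ
    have heig : ∀ q ∈ s, ∀ a ∈ A, ρ a (w q) = β q a • w q := by
      intro q hq a ha
      have htB : t q ∈ B := by simpa [hs] using hq
      have hmem : t q * a * (t q)⁻¹ ∈ A :=
        (Subgroup.mem_normalizer_iff.mp (hB htB) a).mp ha
      have e1 : ρ a (ρ (t q)⁻¹ v) = α (t q * a * (t q)⁻¹) • ρ (t q)⁻¹ v := by
        have e2 : a * (t q)⁻¹ = (t q)⁻¹ * (t q * a * (t q)⁻¹) := by group
        calc ρ a (ρ (t q)⁻¹ v) = ρ (a * (t q)⁻¹) v := (hmul _ _ _).symm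
          _ = ρ ((t q)⁻¹ * (t q * a * (t q)⁻¹)) v := by rw [← e2]
          _ = ρ (t q)⁻¹ (ρ (t q * a * (t q)⁻¹) v) := hmul _ _ _
          _ = α (t q * a * (t q)⁻¹) • ρ (t q)⁻¹ v := by rw [hvα _ hmem, map_smul]
      rw [hw]
      simp only [map_smul, e1, hβ]
      rw [smul_comm]
    have hsep : ∀ q ∈ s, ∀ q' ∈ s, q ≠ q' → ∃ a ∈ A, β q a ≠ β q' a := by
      intro q hq q' hq' hne
      by_contra hcon
      push_neg at hcon
      apply hne
      have hx : t q ∈ B := by simpa [hs] using hq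
      have hy : t q' ∈ B := by simpa [hs] using hq'
      have hb : t q' * (t q)⁻¹ ∈ C := by
        rw [hC]
        refine ⟨mul_mem hy (inv_mem hx), ?_⟩
        intro a ha
        have hy' : (t q')⁻¹ * a * t q' ∈ A := by
          have := (Subgroup.mem_normalizer_iff.mp (hB hy) ((t q')⁻¹ * a * t q')).mpr
          apply this
          have e3 : t q' * ((t q')⁻¹ * a * t q') * (t q')⁻¹ = a := by group
          rw [e3]; exact ha
        have e4 : (t q' * (t q)⁻¹)⁻¹ * a * (t q' * (t q)⁻¹)
            = t q * ((t q')⁻¹ * a * t q') * (t q)⁻¹ := by group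
        rw [e4]
        have h5 := hcon ((t q')⁻¹ * a * t q') hy'
        simp only [hβ] at h5
        rw [h5]
        have e6 : t q' * ((t q')⁻¹ * a * t q') * (t q')⁻¹ = a := by group
        rw [e6]
      have hmk : (Quotient.mk (QuotientGroup.rightRel C) (t q) : _)
          = Quotient.mk (QuotientGroup.rightRel C) (t q') :=
        Quotient.sound ((QuotientGroup.rightRel_apply).mpr hb)
      calc q = Quotient.mk (QuotientGroup.rightRel C) (t q) := (Quotient.out_eq q).symm
        _ = Quotient.mk (QuotientGroup.rightRel C) (t q') := hmk
        _ = q' := Quotient.out_eq q'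
    have hzero : ∀ q ∈ s, w q = 0 := by
      intro q hq
      have hsplit : w q + ∑ q' ∈ s.erase q, w q' = 0 := by
        rw [Finset.add_sum_erase s w hq]; exact hsum'
      exact aux_indep ρ A (s.erase q) β w (w q) (β q)
        (heig q hq) (fun j hj => heig j (Finset.mem_of_mem_erase hj))
        (fun j hj => hsep q hq j (Finset.mem_of_mem_erase hj)
          (Ne.symm (Finset.ne_of_mem_erase hj))) hsplit
    have hft : ∀ q : Quotient (QuotientGroup.rightRel C), (f : G → F) (t q) = 0 := by
      intro q
      by_cases hq : t q ∈ B
      · have h6 := hzero q (by simp [hs, hq])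
        rw [hw] at h6
        rcases smul_eq_zero.mp h6 with h | h
        · exact h
        · exact absurd h (hρv _)
      · exact hf1 _ hq
    apply Subtype.ext
    funext x
    show (f : G → F) x = 0
    have hrel : x * (t (Quotient.mk (QuotientGroup.rightRel C) x))⁻¹ ∈ C :=
      (QuotientGroup.rightRel_apply).mp (Quotient.mk_out x)
    have e7 : x = (x * (t (Quotient.mk (QuotientGroup.rightRel C) x))⁻¹)
        * t (Quotient.mk (QuotientGroup.rightRel C) x) := by group
    rw [e7, hf2 _ hrel, hft, mul_zero]
  refine ⟨Φ, ?_, ?_⟩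
  · intro f g hfg
    have := hker (f - g) (by rw [map_sub, hfg, sub_self])
    exact sub_eq_zero.mp this
  · intro b hb f g hgf
    have hrel : ∀ x y : G, (QuotientGroup.rightRel C) x y
        ↔ (QuotientGroup.rightRel C) (x * b) (y * b) := by
      intro x y
      rw [QuotientGroup.rightRel_apply, QuotientGroup.rightRel_apply]
      have : y * b * (x * b)⁻¹ = y * x⁻¹ := by group
      rw [this]
    set e : Quotient (QuotientGroup.rightRel C) ≃ Quotient (QuotientGroup.rightRel C) :=
      Quotient.congr (Equiv.mulRight b) (fun x y => by simpa using hrel x y) with he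
    rw [hΦapp, hΦapp, map_sum]
    have hterm : ∀ q, ρ b ((f : G → F) (t q) • ρ (t q)⁻¹ v)
        = (f : G → F) (t q) • ρ (b * (t q)⁻¹) v := by
      intro q
      rw [map_smul, hmul]
    rw [Finset.sum_congr rfl (fun q _ => hterm q)]
    rw [← Equiv.sum_comp e (fun q => (f : G → F) (t q) • ρ (b * (t q)⁻¹) v)]
    apply Finset.sum_congr rfl
    intro q _
    -- identify the coset rep of `e q`
    have heq : e q = Quotient.mk (QuotientGroup.rightRel C) (t q * b) := by
      conv_lhs => rw [← Quotient.out_eq q]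
      rw [he]
      rfl
    have hcmem : t (e q) * (t q * b)⁻¹ ∈ C := by
      have h8 : (t q * b) * (t (e q))⁻¹ ∈ C := by
        rw [heq]
        exact (QuotientGroup.rightRel_apply).mp (Quotient.mk_out (t q * b))
      have h9 : t (e q) * (t q * b)⁻¹ = ((t q * b) * (t (e q))⁻¹)⁻¹ := by group
      rw [h9]; exact inv_mem h8
    set c : G := t (e q) * (t q * b)⁻¹ with hc
    have htc : t (e q) = c * (t q * b) := by rw [hc]; group
    have hfc : (f : G → F) (t (e q)) = γ c * (g : G → F) (t q) := by
      rw [htc, f.2.2 c hcmem, ← hgf]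
    have hgc : ρ (b * (t (e q))⁻¹) v = γ c⁻¹ • ρ (t q)⁻¹ v := by
      have e10 : b * (t (e q))⁻¹ = (t q)⁻¹ * c⁻¹ := by rw [htc]; group
      rw [e10, hmul, hvγ c⁻¹ (inv_mem hcmem), map_smul]
    show (g : G → F) (t q) • ρ (t q)⁻¹ v
        = (f : G → F) (t (e q)) • ρ (b * (t (e q))⁻¹) v
    rw [hfc, hgc, smul_smul]
    have e11 : γ c * (g : G → F) (t q) * γ c⁻¹ = (g : G → F) (t q) := by
      calc γ c * (g : G → F) (t q) * γ c⁻¹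
          = (γ c * γ c⁻¹) * (g : G → F) (t q) := by ring
        _ = (g : G → F) (t q) := by rw [hγinv c hcmem, one_mul]
    rw [e11]
end

section
/- Let G = GL_n(q) and let s ∈ G be an element of order q^n − 1 acting irreducibly on the natural module. Then s is conjugate to s⁻¹ in G if and only if (n,q) ∈ {(2,2),(1,2),(1,3)}. -/
open scoped Classical

open Polynomial

private lemma stmt2_arith {q n i : ℕ} (hq : 2 ≤ q) (hn : 0 < n) (hi : i < n)
    (h : q ^ n - 1 ∣ q ^ i + 1) :
    (n = 2 ∧ q = 2) ∨ (n = 1 ∧ q = 2) ∨ (n = 1 ∧ q = 3) := by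
  have hq0 : 1 ≤ q ^ i := Nat.one_le_pow _ _ (by omega)
  have hqq : q ^ 1 ≤ q ^ n := Nat.pow_le_pow_right (by omega) hn
  rw [pow_one] at hqq
  have hqdvd : q ∣ q ^ n := dvd_pow_self q (by omega)
  by_cases h2 : q ^ n = 2
  · have hq2 : q = 2 := by
      have := Nat.le_of_dvd (by omega) (h2 ▸ hqdvd); omega
    refine Or.inr (Or.inl ⟨?_, hq2⟩)
    subst hq2
    exact Nat.pow_right_injective (le_refl 2) (h2.trans (pow_one 2).symm)
  · have h3 : 3 ≤ q ^ n := by omega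
    have hiq : q ^ i ≤ q ^ (n - 1) := Nat.pow_le_pow_right (by omega) (by omega)
    have hn1 : 1 ≤ q ^ (n - 1) := Nat.one_le_pow _ _ (by omega)
    have h2b : 2 * q ^ (n - 1) ≤ q ^ n := by
      have hqs : q * q ^ (n - 1) = q ^ n := by
        rw [← pow_succ']
        congr 1
        omega
      calc 2 * q ^ (n - 1) ≤ q * q ^ (n - 1) := Nat.mul_le_mul_right _ hq
        _ = q ^ n := hqs
    obtain ⟨k, hk⟩ := h
    have hk1 : k = 1 := by
      rcases k with _ | _ | k
      · omega
      · rfl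
      · exfalso
        have hge : (q ^ n - 1) * 2 ≤ (q ^ n - 1) * (k + 1 + 1) :=
          Nat.mul_le_mul_left _ (by omega)
        omega
    subst hk1
    rw [mul_one] at hk
    have heq2 : q ^ n = q ^ i + 2 := by omega
    have hdvd2 : q ^ i ∣ 2 := by
      have h4 : q ^ i ∣ q ^ n := pow_dvd_pow q (le_of_lt hi)
      rw [heq2] at h4
      exact (Nat.dvd_add_right (dvd_refl (q ^ i))).mp h4
    have hle2 : q ^ i ≤ 2 := Nat.le_of_dvd (by omega) hdvd2
    have h12 : q ^ i = 1 ∨ q ^ i = 2 := by omega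
    rcases h12 with h1 | h1
    · -- q^n = 3, so q = 3, n = 1
      have hqn3 : q ^ n = 3 := by omega
      have hq3 : q = 3 := by
        have hd3 : q ∣ 3 := hqn3 ▸ hqdvd
        rcases (Nat.prime_three).eq_one_or_self_of_dvd q hd3 with h | h <;> omega
      subst hq3
      refine Or.inr (Or.inr ⟨?_, rfl⟩)
      exact Nat.pow_right_injective (by norm_num) (hqn3.trans (pow_one 3).symm)
    · -- q^i = 2 : q = 2, i = 1, q^n = 4, n = 2
      have hine : i ≠ 0 := by
        intro h0; rw [h0, pow_zero] at h1; omega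
      have hq2 : q = 2 := by
        have hd : q ∣ 2 := h1 ▸ dvd_pow_self q hine
        have := Nat.le_of_dvd (by omega) hd
        omega
      subst hq2
      refine Or.inl ⟨?_, rfl⟩
      have h4 : (2 : ℕ) ^ n = 2 ^ 2 := by omega
      exact Nat.pow_right_injective (le_refl 2) h4

private lemma stmt2_gl22 :
    ∀ u : Matrix.GeneralLinearGroup (Fin 2) (ZMod 2), u ^ 3 = 1 → IsConj u u⁻¹ := by
  decide

set_option maxHeartbeats 1000000 in
set_option synthInstance.maxHeartbeats 400000 in
private lemma stmt2_key {F : Type} [Field F] [Fintype F] {n : ℕ} (hn : 0 < n)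
    (q : ℕ) (hq : Fintype.card F = q)
    (s : Matrix.GeneralLinearGroup (Fin n) F)
    (hord : orderOf s = q ^ n - 1)
    (hirr : ∀ W : Submodule F (Fin n → F),
      (∀ v ∈ W, (s : Matrix (Fin n) (Fin n) F).mulVec v ∈ W) → W = ⊥ ∨ W = ⊤)
    (hconj : IsConj s s⁻¹) : ∃ i < n, (q ^ n - 1) ∣ (q ^ i + 1) := by
  haveI : Nonempty (Fin n) := Fin.pos_iff_nonempty.mp hn
  have hq2 : 2 ≤ q := hq ▸ Fintype.one_lt_card
  set A : Matrix (Fin n) (Fin n) F := (s : Matrix (Fin n) (Fin n) F) with hA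
  -- Every nonzero matrix commuting with A is invertible.
  have hunit : ∀ x : Matrix (Fin n) (Fin n) F, Commute A x → x ≠ 0 → IsUnit x := by
    intro x hcm hx0
    rw [Matrix.isUnit_iff_isUnit_det, isUnit_iff_ne_zero]
    intro hdet
    obtain ⟨v, hv0, hv⟩ := Matrix.exists_mulVec_eq_zero_iff.mpr hdet
    set W : Submodule F (Fin n → F) := LinearMap.ker x.mulVecLin with hW
    have hWi : ∀ w ∈ W, A.mulVec w ∈ W := by
      intro w hw
      rw [hW, LinearMap.mem_ker, Matrix.mulVecLin_apply] at hw ⊢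
      rw [Matrix.mulVec_mulVec, ← hcm.eq, ← Matrix.mulVec_mulVec, hw, Matrix.mulVec_zero]
    rcases hirr W hWi with hbot | htop
    · have hvW : v ∈ W := by
        rw [hW, LinearMap.mem_ker, Matrix.mulVecLin_apply]; exact hv
      rw [hbot, Submodule.mem_bot] at hvW
      exact hv0 hvW
    · apply hx0
      ext i j
      have hz : x.mulVec (Pi.single j 1) = 0 := by
        have hmem : (Pi.single j 1 : Fin n → F) ∈ W := by rw [htop]; trivial
        rwa [hW, LinearMap.mem_ker, Matrix.mulVecLin_apply] at hmem
      have hzz := congrFun hz i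
      rw [Matrix.mulVec_single] at hzz
      simpa using hzz
  set K := Algebra.adjoin F {A} with hK
  have hAK : A ∈ K := Algebra.self_mem_adjoin_singleton F A
  letI : CommRing K := Algebra.adjoinCommRingOfComm F (by
    intro a ha b hb
    rw [Set.mem_singleton_iff] at ha hb
    subst ha; subst hb; rfl)
  have hKcomm : ∀ x : Matrix (Fin n) (Fin n) F, x ∈ K → Commute A x :=
    fun x hx => Algebra.commute_of_mem_adjoin_self hx
  haveI : Nontrivial K := ⟨0, 1, by
    intro h
    have : (0 : Matrix (Fin n) (Fin n) F) = 1 := congrArg Subtype.val h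
    exact zero_ne_one this⟩
  haveI : NoZeroDivisors K := by
    constructor
    intro x y hxy
    by_contra hcon
    push_neg at hcon
    obtain ⟨hx0, hy0⟩ := hcon
    have hxu : IsUnit (x : Matrix (Fin n) (Fin n) F) :=
      hunit x.1 (hKcomm _ x.2) (fun h => hx0 (Subtype.ext h))
    have hmul : (x : Matrix (Fin n) (Fin n) F) * y = (x : Matrix (Fin n) (Fin n) F) * 0 := by
      have := congrArg Subtype.val hxy
      simpa [mul_zero] using this
    exact hy0 (Subtype.ext (by simpa using hxu.mul_left_cancel hmul))
  haveI : IsDomain K := NoZeroDivisors.to_isDomain _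
  letI : Fintype K := Fintype.ofFinite K
  letI : Field K := Fintype.fieldOfDomain K
  set x : K := ⟨A, hAK⟩ with hx
  have hx0 : x ≠ 0 := by
    intro h
    have hA0 : A = 0 := congrArg Subtype.val h
    have h1 : (1 : Matrix (Fin n) (Fin n) F) = 0 := by
      have hmi := s.mul_inv
      rw [show ((s : Matrix (Fin n) (Fin n) F)) = A from rfl, hA0, zero_mul] at hmi
      exact hmi.symm
    exact one_ne_zero h1
  obtain ⟨u, hu⟩ := isUnit_iff_ne_zero.mpr hx0
  have hordu : orderOf u = q ^ n - 1 := by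
    rw [← orderOf_units, hu]
    have h1 : orderOf A = orderOf x :=
      orderOf_injective (K.val : K →ₐ[F] Matrix (Fin n) (Fin n) F).toRingHom.toMonoidHom
        Subtype.val_injective x
    rw [← h1]
    rw [show A = ((s : Matrix (Fin n) (Fin n) F)) from rfl, orderOf_units, hord]
  -- characteristic
  set p := ringChar F with hp
  haveI : CharP F p := ringChar.charP F
  obtain ⟨e, hpp, hcard⟩ := FiniteField.card F p
  haveI : Fact p.Prime := ⟨hpp⟩
  haveI : CharP K p := charP_of_injective_algebraMap (algebraMap F K).injective p
  have hqpe : q = p ^ (e : ℕ) := by rw [← hq, hcard]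
  have hfrob : ∀ z w : K, (z + w) ^ q = z ^ q + w ^ q := by
    intro z w
    rw [hqpe]
    exact add_pow_char_pow ..
  set ψ : K →ₐ[F] K :=
    { toFun := fun z => z ^ q
      map_one' := one_pow q
      map_mul' := fun a b => mul_pow a b q
      map_zero' := zero_pow (by omega)
      map_add' := hfrob
      commutes' := fun a => by
        show (algebraMap F K a) ^ q = algebraMap F K a
        rw [← map_pow]
        congr 1
        rw [← hq]
        exact FiniteField.pow_card a } with hψ
  -- minimal polynomial
  have hxint : IsIntegral F x := IsIntegral.of_finite F x
  set m := minpoly F x with hm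
  have hm0 : m ≠ 0 := minpoly.ne_zero hxint
  have haev : Polynomial.aeval x m = 0 := minpoly.aeval F x
  have hmA : m = minpoly F A := by
    rw [hm, ← minpoly.algHom_eq (K.val : K →ₐ[F] Matrix (Fin n) (Fin n) F)
      Subtype.val_injective x]
    rfl
  have hmdeg : m.natDegree ≤ n := by
    rw [hmA]
    have h1 : minpoly F A ∣ A.charpoly := A.minpoly_dvd_charpoly
    have h2 := Polynomial.natDegree_le_of_dvd h1 A.charpoly_monic.ne_zero
    rwa [A.charpoly_natDegree_eq_dim, Fintype.card_fin] at h2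
  have hroots : ∀ z : K, Polynomial.aeval z m = 0 →
      z ∈ (m.map (algebraMap F K)).roots.toFinset := by
    intro z hz
    rw [Multiset.mem_toFinset, Polynomial.mem_roots (Polynomial.map_ne_zero hm0),
      Polynomial.IsRoot, Polynomial.eval_map, ← Polynomial.aeval_def]
    exact hz
  have hpow : ∀ i : ℕ, Polynomial.aeval (x ^ q ^ i) m = 0 := by
    intro i
    induction i with
    | zero => simpa using haev
    | succ i ih =>
      have h1 : x ^ q ^ (i + 1) = ψ (x ^ q ^ i) := by
        show _ = (x ^ q ^ i) ^ q
        rw [← pow_mul, pow_succ]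
      rw [h1, Polynomial.aeval_algHom_apply, ih, map_zero]
  have hne : ∀ i j : ℕ, i < j → j < n → x ^ q ^ i ≠ x ^ q ^ j := by
    intro i j hij' hj hij
    have hu' : u ^ q ^ i = u ^ q ^ j := by
      apply Units.ext
      rw [Units.val_pow_eq_pow_val, Units.val_pow_eq_pow_val, hu]
      exact hij
    rw [pow_eq_pow_iff_modEq, hordu] at hu'
    have hle : q ^ i ≤ q ^ j := Nat.pow_le_pow_right (by omega) (by omega)
    have hdvd := (Nat.modEq_iff_dvd' hle).mp hu'
    have hjlt : q ^ j ≤ q ^ (n - 1) := Nat.pow_le_pow_right (by omega) (by omega)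
    have hlt : q ^ (n - 1) < q ^ n := Nat.pow_lt_pow_right (by omega) (by omega)
    have hilt : q ^ i < q ^ j := Nat.pow_lt_pow_right (by omega) hij'
    have hfin := Nat.le_of_dvd (by omega) hdvd
    have h1iq : 1 ≤ q ^ i := Nat.one_le_pow _ _ (by omega)
    omega
  have hinj : Set.InjOn (fun i : ℕ => x ^ q ^ i) (Finset.range n) := by
    intro i hi j hj hij
    simp only [Finset.coe_range, Set.mem_Iio] at hi hj
    rcases lt_trichotomy i j with h | h | h
    · exact absurd hij (hne i j h hj)
    · exact h
    · exact absurd hij.symm (hne j i h hi)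
  set S := (Finset.range n).image (fun i : ℕ => x ^ q ^ i) with hS
  have hScard : S.card = n := by
    rw [hS, Finset.card_image_of_injOn hinj, Finset.card_range]
  have hSsub : S ⊆ (m.map (algebraMap F K)).roots.toFinset := by
    intro z hz
    rw [hS, Finset.mem_image] at hz
    obtain ⟨i, _, rfl⟩ := hz
    exact hroots _ (hpow i)
  have hcard_le : (m.map (algebraMap F K)).roots.toFinset.card ≤ n := by
    refine le_trans (Multiset.toFinset_card_le _) (le_trans (Polynomial.card_roots' _) ?_)
    rw [Polynomial.natDegree_map]
    exact hmdeg
  set y : K := ↑u⁻¹ with hy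
  have hyval : (y : Matrix (Fin n) (Fin n) F) = ((s⁻¹ : Matrix.GeneralLinearGroup (Fin n) F) :
      Matrix (Fin n) (Fin n) F) := by
    have h1 : A * (y : Matrix (Fin n) (Fin n) F) = 1 := by
      have hxy : x * y = 1 := by rw [hy, ← hu, u.mul_inv]
      have := congrArg Subtype.val hxy
      simpa using this
    have h2 : ((s⁻¹ : Matrix.GeneralLinearGroup (Fin n) F) :
        Matrix (Fin n) (Fin n) F) * A = 1 := by
      rw [show A = ((s : Matrix (Fin n) (Fin n) F)) from rfl, ← Units.val_mul,
        inv_mul_cancel, Units.val_one]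
    calc (y : Matrix (Fin n) (Fin n) F) = 1 * y := (one_mul _).symm
      _ = (((s⁻¹ : Matrix.GeneralLinearGroup (Fin n) F) :
            Matrix (Fin n) (Fin n) F) * A) * y := by rw [h2]
      _ = ((s⁻¹ : Matrix.GeneralLinearGroup (Fin n) F) :
            Matrix (Fin n) (Fin n) F) * (A * y) := by rw [mul_assoc]
      _ = _ := by rw [h1, mul_one]
  have hyroot : Polynomial.aeval y m = 0 := by
    obtain ⟨c, hc⟩ := isConj_iff.mp hconj
    set φ : Matrix (Fin n) (Fin n) F →ₐ[F] Matrix (Fin n) (Fin n) F :=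
      { toFun := fun z => ↑c * z * ↑c⁻¹
        map_one' := by
          show (c : Matrix (Fin n) (Fin n) F) * 1 * ((c⁻¹ : Matrix.GeneralLinearGroup (Fin n) F) : Matrix (Fin n) (Fin n) F) = 1
          rw [mul_one]; exact c.mul_inv
        map_mul' := fun a b => by
          show (c : Matrix (Fin n) (Fin n) F) * (a * b) * ((c⁻¹ : Matrix.GeneralLinearGroup (Fin n) F) : Matrix (Fin n) (Fin n) F) = ((c : Matrix (Fin n) (Fin n) F) * a * ((c⁻¹ : Matrix.GeneralLinearGroup (Fin n) F) : Matrix (Fin n) (Fin n) F)) * ((c : Matrix (Fin n) (Fin n) F) * b * ((c⁻¹ : Matrix.GeneralLinearGroup (Fin n) F) : Matrix (Fin n) (Fin n) F))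
          simp only [mul_assoc]
          rw [← mul_assoc ((c⁻¹ : Matrix.GeneralLinearGroup (Fin n) F) :
            Matrix (Fin n) (Fin n) F), c.inv_mul, one_mul]
        map_zero' := by
          show (c : Matrix (Fin n) (Fin n) F) * 0 * ((c⁻¹ : Matrix.GeneralLinearGroup (Fin n) F) : Matrix (Fin n) (Fin n) F) = 0
          rw [mul_zero, zero_mul]
        map_add' := fun a b => by
          show (c : Matrix (Fin n) (Fin n) F) * (a + b) * ((c⁻¹ : Matrix.GeneralLinearGroup (Fin n) F) : Matrix (Fin n) (Fin n) F) = (c : Matrix (Fin n) (Fin n) F) * a * ((c⁻¹ : Matrix.GeneralLinearGroup (Fin n) F) : Matrix (Fin n) (Fin n) F) + (c : Matrix (Fin n) (Fin n) F) * b * ((c⁻¹ : Matrix.GeneralLinearGroup (Fin n) F) : Matrix (Fin n) (Fin n) F)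
          rw [mul_add, add_mul]
        commutes' := fun a => by
          show (c : Matrix (Fin n) (Fin n) F) * algebraMap F (Matrix (Fin n) (Fin n) F) a * ((c⁻¹ : Matrix.GeneralLinearGroup (Fin n) F) : Matrix (Fin n) (Fin n) F) = _
          rw [← Algebra.commutes a ((c : Matrix (Fin n) (Fin n) F)), mul_assoc,
            c.mul_inv, mul_one] } with hφ
    have h1 : Polynomial.aeval A m = 0 := by
      have h1' := Polynomial.aeval_algHom_apply
        (K.val : K →ₐ[F] Matrix (Fin n) (Fin n) F) x m
      rw [haev, map_zero] at h1'
      exact h1'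
    have h2 : Polynomial.aeval (φ A) m = 0 := by
      rw [Polynomial.aeval_algHom_apply, h1, map_zero]
    have h3 : φ A = ((s⁻¹ : Matrix.GeneralLinearGroup (Fin n) F) :
        Matrix (Fin n) (Fin n) F) := by
      show (c : Matrix (Fin n) (Fin n) F) * A * ((c⁻¹ : Matrix.GeneralLinearGroup (Fin n) F) : Matrix (Fin n) (Fin n) F) = _
      rw [show A = ((s : Matrix (Fin n) (Fin n) F)) from rfl, ← Units.val_mul, ← Units.val_mul,
        hc]
    rw [h3] at h2
    have h4 := Polynomial.aeval_algHom_apply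
      (K.val : K →ₐ[F] Matrix (Fin n) (Fin n) F) y m
    apply Subtype.val_injective
    rw [show (K.val (Polynomial.aeval y m) : Matrix (Fin n) (Fin n) F) =
      Subtype.val (Polynomial.aeval y m) from rfl] at h4
    have h5 : (Polynomial.aeval y m : K).val = (0 : Matrix (Fin n) (Fin n) F) := by
      rw [← h4]
      rw [show ((K.val : K →ₐ[F] Matrix (Fin n) (Fin n) F) y) =
        (y : Matrix (Fin n) (Fin n) F) from rfl, hyval]
      exact h2
    exact h5
  have hymem := hroots y hyroot
  have hyS : y ∈ S := by
    by_contra hySn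
    have h7 : insert y S ⊆ (m.map (algebraMap F K)).roots.toFinset :=
      Finset.insert_subset hymem hSsub
    have h8 := Finset.card_le_card h7
    rw [Finset.card_insert_of_notMem hySn, hScard] at h8
    omega
  rw [hS, Finset.mem_image] at hyS
  obtain ⟨i, hi, hxy⟩ := hyS
  refine ⟨i, Finset.mem_range.mp hi, ?_⟩
  have h8 : u ^ (q ^ i + 1) = 1 := by
    apply Units.ext
    rw [Units.val_pow_eq_pow_val, Units.val_one, hu, pow_succ, hxy, hy, ← hu]
    exact u.inv_mul
  rw [← hordu]
  exact orderOf_dvd_of_pow_eq_one h8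

/-- Let `G = GL_n(q)` and let `s ∈ G` be an element of order `q^n − 1`
acting irreducibly on the natural module.  Then `s` is conjugate to `s⁻¹` in `G` if and
only if `(n,q) ∈ {(2,2),(1,2),(1,3)}`. -/
theorem stmt_2 {F : Type} [Field F] [Fintype F] {n : ℕ} (hn : 0 < n)
    (q : ℕ) (hq : Fintype.card F = q)
    (s : Matrix.GeneralLinearGroup (Fin n) F)
    (hord : orderOf s = q ^ n - 1)
    (hirr : ∀ W : Submodule F (Fin n → F),
      (∀ v ∈ W, (s : Matrix (Fin n) (Fin n) F).mulVec v ∈ W) → W = ⊥ ∨ W = ⊤) :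
    IsConj s s⁻¹ ↔ (n = 2 ∧ q = 2) ∨ (n = 1 ∧ q = 2) ∨ (n = 1 ∧ q = 3) := by
  constructor
  · intro h
    obtain ⟨i, hi, hdvd⟩ := stmt2_key hn q hq s hord hirr h
    exact stmt2_arith (hq ▸ Fintype.one_lt_card) hn hi hdvd
  · rintro (⟨hn2, hq2⟩ | ⟨hn1, hq2⟩ | ⟨hn1, hq3⟩)
    · subst hn2; subst hq2
      have hs3 : s ^ 3 = 1 := by
        have h := pow_orderOf_eq_one s
        rw [hord] at h
        norm_num at h
        exact h
      have e : ZMod 2 ≃+* F := ZMod.ringEquivOfPrime F Nat.prime_two hq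
      have eg : Matrix.GeneralLinearGroup (Fin 2) (ZMod 2) ≃*
          Matrix.GeneralLinearGroup (Fin 2) F :=
        Units.mapEquiv e.mapMatrix.toMulEquiv
      have ht : (eg.symm s) ^ 3 = 1 := by
        rw [← map_pow, hs3, map_one]
      have hcj := eg.toMonoidHom.map_isConj (stmt2_gl22 (eg.symm s) ht)
      simpa [map_inv, MulEquiv.apply_symm_apply] using hcj
    · subst hn1; subst hq2
      have h1 : s = 1 := orderOf_eq_one_iff.mp (by rw [hord]; norm_num)
      rw [h1, inv_one]
    · subst hn1; subst hq3
      have h2 : s ^ 2 = 1 := by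
        have h := pow_orderOf_eq_one s
        rw [hord] at h
        norm_num at h
        exact h
      have h3 : s⁻¹ = s := by
        exact inv_eq_of_mul_eq_one_right (show s * s = 1 by rw [← pow_two]; exact h2)
      rw [h3]
end

section
/- Let r = q² and G = GL_n(r), let s ∈ G be an element of order r^n − 1 acting irreducibly, let σ be the automorphism of G induced entrywise by the Galois automorphism x ↦ x^q of F_r over F_q, and set s₁ = s^{q+1}. Then s₁ is conjugate in G to σ(s₁⁻¹) if and only if n = 1 and q ≤ 3. -/
open scoped Classical

open Polynomial

set_option maxHeartbeats 2000000
set_option synthInstance.maxHeartbeats 200000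

/-- Conjugation by a unit, as a ring homomorphism. -/
def unitConj {R : Type*} [Ring R] (u : Rˣ) : R →+* R where
  toFun x := ↑u * x * ↑u⁻¹
  map_one' := by simp
  map_mul' x y := by
    calc ↑u * (x * y) * ↑u⁻¹ = (↑u * x) * (↑u⁻¹ * ↑u) * (y * ↑u⁻¹) := by
          rw [Units.inv_mul]; noncomm_ring
      _ = ↑u * x * ↑u⁻¹ * (↑u * y * ↑u⁻¹) := by noncomm_ring
  map_zero' := by simp
  map_add' x y := by noncomm_ring

lemma unitConj_apply {R : Type*} [Ring R] (u : Rˣ) (x : R) :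
    unitConj u x = ↑u * x * ↑u⁻¹ := rfl

lemma aeval_ringHom_comm {E B : Type*} [CommRing E] [Ring B] [Algebra E B]
    (Φ : B →+* B) (τ : E →+* E)
    (h : ∀ c : E, Φ (algebraMap E B c) = algebraMap E B (τ c))
    (x : B) (p : E[X]) :
    aeval (Φ x) (p.map τ) = Φ (aeval x p) := by
  rw [aeval_def, eval₂_map, aeval_def, Polynomial.hom_eval₂]
  congr 1
  exact RingHom.ext fun c => (h c).symm

lemma minpoly_ringHom_map {E B : Type*} [Field E] [Ring B] [Algebra E B] [Nontrivial B]
    (Φ Ψ : B →+* B) (τ υ : E →+* E)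
    (hΦ : ∀ c : E, Φ (algebraMap E B c) = algebraMap E B (τ c))
    (hΨ : ∀ c : E, Ψ (algebraMap E B c) = algebraMap E B (υ c))
    (hΨΦ : ∀ x : B, Ψ (Φ x) = x)
    (hτυ : ∀ c : E, τ (υ c) = c)
    (x : B) (hx : IsIntegral E x) (hx' : IsIntegral E (Φ x)) :
    minpoly E (Φ x) = (minpoly E x).map τ := by
  have d1 : minpoly E (Φ x) ∣ (minpoly E x).map τ :=
    minpoly.dvd E _ (by rw [aeval_ringHom_comm Φ τ hΦ, minpoly.aeval, map_zero])
  have d0 : minpoly E x ∣ (minpoly E (Φ x)).map υ :=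
    minpoly.dvd E _ (by
      have h2 := aeval_ringHom_comm Ψ υ hΨ (Φ x) (minpoly E (Φ x))
      rw [minpoly.aeval, map_zero, hΨΦ] at h2
      exact h2)
  have d2 : (minpoly E x).map τ ∣ minpoly E (Φ x) := by
    have h3 := Polynomial.map_dvd τ d0
    rwa [Polynomial.map_map,
      (by ext c; simp [hτυ] : τ.comp υ = RingHom.id E), Polynomial.map_id] at h3
  exact Polynomial.eq_of_monic_of_associated (minpoly.monic hx')
    ((minpoly.monic hx).map τ) (associated_of_dvd_dvd d1 d2)

lemma stmt4_arith {q n i : ℕ} (hq : 2 ≤ q) (hn : 0 < n) (hi : i < n)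
    (hdvd : q ^ (2 * n) - 1 ∣ (q + 1) * (q ^ (2 * i) + q)) : n = 1 ∧ q ≤ 3 := by
  have hn1 : n = 1 := by
    by_contra hne
    have hn2 : 2 ≤ n := by omega
    have hpos : 0 < (q + 1) * (q ^ (2 * i) + q) := by positivity
    have hle : q ^ (2 * n) - 1 ≤ (q + 1) * (q ^ (2 * i) + q) :=
      Nat.le_of_dvd hpos hdvd
    have hii : q ^ (2 * i) ≤ q ^ (2 * n - 2) :=
      Nat.pow_le_pow_right (by omega) (by omega)
    have hle2 : q ^ (2 * n) - 1 ≤ (q + 1) * (q ^ (2 * n - 2) + q) := by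
      calc q ^ (2 * n) - 1 ≤ (q + 1) * (q ^ (2 * i) + q) := hle
        _ ≤ (q + 1) * (q ^ (2 * n - 2) + q) := Nat.mul_le_mul_left _ (by omega)
    by_cases hq22 : q = 2 ∧ n = 2
    · obtain ⟨hq2, hn2'⟩ := hq22
      subst hq2 hn2'
      interval_cases i <;> revert hdvd <;> decide
    · set a := 2 * n - 2 with ha
      have h2n : 2 * n = a + 2 := by omega
      have ha2 : 2 ≤ a := by omega
      have hpowsplit : q ^ (2 * n) = q ^ a * q ^ 2 := by rw [h2n, pow_add]
      have hq2a : q ^ 2 ≤ q ^ a := Nat.pow_le_pow_right (by omega) ha2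
      have hexp : (q + 1) * (q ^ a + q) = q ^ a * q + q ^ a + q ^ 2 + q := by ring
      rw [hexp, hpowsplit] at hle2
      have hle2' : q ^ a * q ^ 2 ≤ q ^ a * q + q ^ a + q ^ 2 + q + 1 := by omega
      rcases Nat.lt_or_ge q 3 with hq3 | hq3
      · have hq2' : q = 2 := by omega
        subst hq2'
        have han : 4 ≤ a := by omega
        have : 2 ^ 4 ≤ 2 ^ a := Nat.pow_le_pow_right (by omega) han
        omega
      · have h1 : q ^ a * (3 * q) ≤ q ^ a * q ^ 2 :=
          Nat.mul_le_mul_left _ (by nlinarith)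
        have h4 : q ^ a * (3 * q) = q ^ a * q + q ^ a * q + q ^ a * q := by ring
        have h2 : q ^ a * 3 ≤ q ^ a * q := Nat.mul_le_mul_left _ hq3
        have h3 : q ^ 2 * 3 ≤ q ^ a * 3 := Nat.mul_le_mul_right _ hq2a
        have h6 : 3 * q ≤ q * q := Nat.mul_le_mul_right q hq3
        have h7 : q ^ 2 = q * q := by ring
        omega
  refine ⟨hn1, ?_⟩
  subst hn1
  have hi0 : i = 0 := by omega
  subst hi0
  have hfac : q ^ (2 * 1) - 1 = (q + 1) * (q - 1) := by
    have h1 : q ^ (2 * 1) = q * q := by ring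
    have h2 : (q + 1) * (q - 1) = q * q - 1 := by
      cases' Nat.exists_eq_add_of_le hq with k hk
      subst hk
      rw [show 2 + k - 1 = k + 1 by omega]
      have h5 : (2 + k + 1) * (k + 1) + 1 = (2 + k) * (2 + k) := by ring
      omega
    omega
  rw [hfac] at hdvd
  have hsimp : (q + 1) * (q ^ (2 * 0) + q) = (q + 1) * (1 + q) := by norm_num
  rw [hsimp] at hdvd
  have hdvd2 : q - 1 ∣ 1 + q :=
    (Nat.mul_dvd_mul_iff_left (show 0 < q + 1 by omega)).mp hdvd
  have hdvd3 : q - 1 ∣ 2 := by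
    have h4 : (1 + q) - (q - 1) = 2 := by omega
    have := Nat.dvd_sub hdvd2 (dvd_refl (q - 1))
    rwa [h4] at this
  have := Nat.le_of_dvd (by omega) hdvd3
  omega

lemma pow_entry_one {E : Type*} [CommRing E] (M : Matrix (Fin 1) (Fin 1) E) (k : ℕ) :
    (M ^ k) 0 0 = (M 0 0) ^ k := by
  induction k with
  | zero => simp [Matrix.one_apply]
  | succ k ih => rw [pow_succ, pow_succ, Matrix.mul_apply, Fin.sum_univ_one, ih]

/-- Let `r = q²`, `G = GL_n(r)`, let `s ∈ G` be an element of order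
`r^n − 1` acting irreducibly, let `σ` be the automorphism of `G` induced entrywise by
the Galois automorphism `x ↦ x^q` of `F_r` over `F_q`, and set `s₁ = s^{q+1}`.  Then
`s₁` is conjugate in `G` to `σ(s₁⁻¹)` if and only if `n = 1` and `q ≤ 3`. -/
theorem stmt_4 {E : Type} [Field E] [Fintype E] {n : ℕ} (hn : 0 < n)
    (p q f : ℕ) (hp : p.Prime) (hf : 0 < f) (hqp : q = p ^ f)
    (hcard : Fintype.card E = q ^ 2)
    (σ : E →+* E) (hσ : ∀ x : E, σ x = x ^ q)
    (s : Matrix.GeneralLinearGroup (Fin n) E)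
    (hord : orderOf s = (q ^ 2) ^ n - 1)
    (hirr : ∀ W : Submodule E (Fin n → E),
      (∀ v ∈ W, (s : Matrix (Fin n) (Fin n) E).mulVec v ∈ W) → W = ⊥ ∨ W = ⊤)
    (s₁ : Matrix.GeneralLinearGroup (Fin n) E) (hs₁ : s₁ = s ^ (q + 1)) :
    (∃ g : Matrix.GeneralLinearGroup (Fin n) E,
        (g : Matrix (Fin n) (Fin n) E) *
            ((s₁⁻¹ : Matrix.GeneralLinearGroup (Fin n) E) : Matrix (Fin n) (Fin n) E).map σ *
            ((g⁻¹ : Matrix.GeneralLinearGroup (Fin n) E) : Matrix (Fin n) (Fin n) E) =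
          (s₁ : Matrix (Fin n) (Fin n) E)) ↔
      (n = 1 ∧ q ≤ 3) := by
  have hq2 : 2 ≤ q := by
    rw [hqp]
    calc 2 ≤ p := hp.two_le
      _ ≤ p ^ f := Nat.le_self_pow (by omega) p
  have hq4 : 4 ≤ q ^ 2 := by nlinarith
  have hK : q ^ 2 ≤ (q ^ 2) ^ n := Nat.le_self_pow (by omega) _
  constructor
  · rintro ⟨g, hg⟩
    obtain ⟨b, hb⟩ : ∃ b, (q ^ 2) ^ n - 1 = b + 1 := ⟨(q ^ 2) ^ n - 2, by omega⟩
    rw [hb] at hord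
    set t : Matrix (Fin n) (Fin n) E := ((s : Matrix (Fin n) (Fin n) E)) with ht
    have hsa : s ^ (b + 1) = 1 := by rw [← hord]; exact pow_orderOf_eq_one s
    have hs₁inv : s₁⁻¹ = s ^ ((q + 1) * b) := by
      apply inv_eq_of_mul_eq_one_right
      rw [hs₁, ← pow_add, show (q + 1) + (q + 1) * b = (b + 1) * (q + 1) by ring,
        pow_mul, hsa, one_pow]
    have hMs₁ : ((s₁ : Matrix.GeneralLinearGroup (Fin n) E) : Matrix (Fin n) (Fin n) E)
        = t ^ (q + 1) := by rw [hs₁]; exact Units.val_pow_eq_pow_val _ _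
    have hMs₁inv : ((s₁⁻¹ : Matrix.GeneralLinearGroup (Fin n) E) : Matrix (Fin n) (Fin n) E)
        = t ^ ((q + 1) * b) := by rw [hs₁inv]; exact Units.val_pow_eq_pow_val _ _
    -- the commutative subalgebra generated by t
    set A := Algebra.adjoin E {t} with hA
    letI : CommRing ↥A := Algebra.adjoinCommRingOfComm E (by
      rintro x hx y hy
      rw [Set.mem_singleton_iff] at hx hy; subst hx; subst hy; rfl)
    have htA : t ∈ A := Algebra.subset_adjoin (Set.mem_singleton t)
    have hcommt : ∀ x : Matrix (Fin n) (Fin n) E, x ∈ A → x * t = t * x := by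
      intro x hx
      induction hx using Algebra.adjoin_induction with
      | mem y hy => rw [Set.mem_singleton_iff] at hy; subst hy; rfl
      | algebraMap r => exact (Algebra.commutes r t)
      | add x y hx hy ihx ihy => rw [add_mul, mul_add, ihx, ihy]
      | mul x y hx hy ihx ihy => rw [mul_assoc, ihy, ← mul_assoc, ihx, mul_assoc]
    have hMnontriv : (1 : Matrix (Fin n) (Fin n) E) ≠ 0 := by
      intro h1
      have h2 := congrFun (congrFun h1 ⟨0, hn⟩) ⟨0, hn⟩
      rw [Matrix.one_apply_eq] at h2
      exact one_ne_zero h2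
    haveI : Nontrivial ↥A := ⟨⟨1, 0, fun h => hMnontriv (congrArg Subtype.val h)⟩⟩
    haveI hNZD : NoZeroDivisors ↥A := by
      constructor
      intro a c hac
      by_cases ha : a = 0
      · exact Or.inl ha
      right
      have hWinv : ∀ v ∈ LinearMap.ker (Matrix.toLin' (a : Matrix (Fin n) (Fin n) E)),
          t.mulVec v ∈ LinearMap.ker (Matrix.toLin' (a : Matrix (Fin n) (Fin n) E)) := by
        intro v hv
        rw [LinearMap.mem_ker, Matrix.toLin'_apply] at hv ⊢
        rw [Matrix.mulVec_mulVec, hcommt _ a.2, ← Matrix.mulVec_mulVec, hv,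
          Matrix.mulVec_zero]
      rcases hirr _ hWinv with hbot | htop
      · -- a is injective, so c = 0
        have hinj : Function.Injective (Matrix.toLin' (a : Matrix (Fin n) (Fin n) E)) :=
          LinearMap.ker_eq_bot.mp hbot
        have hc0 : (c : Matrix (Fin n) (Fin n) E) = 0 := by
          apply Matrix.toLin'.injective
          rw [map_zero]
          apply LinearMap.ext
          intro v
          apply hinj
          rw [LinearMap.zero_apply, map_zero]
          have : ((a : Matrix (Fin n) (Fin n) E) * (c : Matrix (Fin n) (Fin n) E)) = 0 := by
            have := congrArg (Subtype.val) hac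
            simpa using this
          rw [← Matrix.toLin'_mul_apply, this, map_zero, LinearMap.zero_apply]
        exact Subtype.ext hc0
      · exfalso
        apply ha
        apply Subtype.ext
        show (a : Matrix (Fin n) (Fin n) E) = 0
        apply Matrix.toLin'.injective
        rw [map_zero]
        exact LinearMap.ker_eq_top.mp htop
    letI : IsDomain ↥A := NoZeroDivisors.to_isDomain _
    -- characteristic
    have hpE : CharP E p := by
      have h0 : ((q ^ 2 : ℕ) : E) = 0 := by rw [← hcard]; exact Nat.cast_card_eq_zero E
      have h1 : ((p : E)) ^ (f * 2) = 0 := by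
        have h1' : ((p ^ (f * 2) : ℕ) : E) = 0 := by
          rw [show p ^ (f * 2) = q ^ 2 by rw [hqp, pow_mul]]
          exact h0
        exact_mod_cast h1'
      have h2 : (p : E) = 0 := pow_eq_zero_iff (by omega) |>.mp h1
      have h3 : ringChar E ∣ p := (CharP.cast_eq_zero_iff E (ringChar E) p).mp h2
      rcases (Nat.Prime.eq_one_or_self_of_dvd hp _ h3) with h4 | h4
      · exfalso
        have h5 : ((1 : ℕ) : E) = 0 := by
          rw [← h4]; exact CharP.cast_eq_zero E (ringChar E)
        simp at h5
      · rw [← h4]; exact ringChar.charP E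
    haveI := Fact.mk hp
    haveI : CharP E p := hpE
    letI : CharP ↥A p := charP_of_injective_algebraMap (algebraMap E ↥A).injective p
    set φ : ↥A →+* ↥A := iterateFrobenius ↥A p f with hφdef
    have hφ : ∀ x : ↥A, φ x = x ^ q := fun x => by
      rw [hφdef, iterateFrobenius_def, hqp]
    set φ₂ : ↥A →+* ↥A := iterateFrobenius ↥A p (2 * f) with hφ₂def
    have hφ₂ : ∀ x : ↥A, φ₂ x = x ^ (q ^ 2) := fun x => by
      rw [hφ₂def, iterateFrobenius_def]
      congr 1
      rw [hqp, ← pow_mul, mul_comm f 2]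
    have hφalg : ∀ c : E, φ (algebraMap E ↥A c) = algebraMap E ↥A (σ c) := fun c => by
      rw [hφ, ← map_pow, hσ]
    -- elements λ₁ and λ₁'
    set lam : ↥A := ⟨t ^ (q + 1), pow_mem htA _⟩ with hlam
    set lam' : ↥A := ⟨t ^ ((q + 1) * b), pow_mem htA _⟩ with hlam'
    have hlamv : (lam : Matrix (Fin n) (Fin n) E) = t ^ (q + 1) := rfl
    have hlamv' : (lam' : Matrix (Fin n) (Fin n) E) = t ^ ((q + 1) * b) := rfl
    -- exponent congruence lemmas
    have hts : ∀ k m : ℕ, k ≡ m [MOD b + 1] → t ^ k = t ^ m := by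
      intro k m hkm
      have h1 : s ^ k = s ^ m := pow_eq_pow_iff_modEq.mpr (by rw [hord]; exact hkm)
      calc t ^ k = ((s ^ k : Matrix.GeneralLinearGroup (Fin n) E) :
              Matrix (Fin n) (Fin n) E) := (Units.val_pow_eq_pow_val _ _).symm
        _ = ((s ^ m : Matrix.GeneralLinearGroup (Fin n) E) :
              Matrix (Fin n) (Fin n) E) := by rw [h1]
        _ = t ^ m := Units.val_pow_eq_pow_val _ _
    have hst : ∀ k m : ℕ, t ^ k = t ^ m → k ≡ m [MOD b + 1] := by
      intro k m hkm
      have h1 : s ^ k = s ^ m := Units.ext (by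
        rw [Units.val_pow_eq_pow_val, Units.val_pow_eq_pow_val]; exact hkm)
      rw [← hord]; exact pow_eq_pow_iff_modEq.mp h1
    have hKmod : (q ^ 2) ^ n ≡ 1 [MOD b + 1] :=
      ((Nat.modEq_iff_dvd' (by omega)).mpr (by rw [hb])).symm
    have hlampow : lam ^ ((q ^ 2) ^ n) = lam := by
      apply Subtype.ext
      rw [SubmonoidClass.coe_pow, hlamv, ← pow_mul]
      have h1 := hts ((q + 1) * ((q ^ 2) ^ n)) ((q + 1) * 1)
        (Nat.ModEq.mul_left _ hKmod)
      rwa [mul_one] at h1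
    -- minpoly identities
    have hIntM : ∀ M : Matrix (Fin n) (Fin n) E, IsIntegral E M := fun M =>
      ⟨M.charpoly, M.charpoly_monic, by
        have := M.aeval_self_charpoly
        rwa [aeval_def] at this⟩
    have hσinj : Function.Injective σ := σ.injective
    have hσbij : Function.Bijective σ := ⟨hσinj, Finite.injective_iff_surjective.mp hσinj⟩
    set σe : E ≃+* E := RingEquiv.ofBijective σ hσbij with hσe
    have hτυ : ∀ c : E, σ ((σe.symm : E →+* E) c) = c := fun c => σe.apply_symm_apply c
    have hυτ : ∀ c : E, (σe.symm : E →+* E) (σ c) = c := fun c => σe.symm_apply_apply c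
    -- conjugation invariance
    have hΦc : ∀ c : E, unitConj g (algebraMap E (Matrix (Fin n) (Fin n) E) c)
        = algebraMap E (Matrix (Fin n) (Fin n) E) ((RingHom.id E) c) := by
      intro c
      rw [unitConj_apply, RingHom.id_apply, ← Algebra.commutes, mul_assoc,
        Units.mul_inv, mul_one]
    have hΨc : ∀ c : E, unitConj g⁻¹ (algebraMap E (Matrix (Fin n) (Fin n) E) c)
        = algebraMap E (Matrix (Fin n) (Fin n) E) ((RingHom.id E) c) := by
      intro c
      rw [unitConj_apply, RingHom.id_apply, ← Algebra.commutes, mul_assoc,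
        Units.mul_inv, mul_one]
    have hΨΦc : ∀ x : Matrix (Fin n) (Fin n) E, unitConj g⁻¹ (unitConj g x) = x := by
      intro x
      rw [unitConj_apply, unitConj_apply, inv_inv]
      calc (↑g⁻¹ : Matrix (Fin n) (Fin n) E) * (↑g * x * ↑g⁻¹) * ↑g
          = (↑g⁻¹ * ↑g) * x * (↑g⁻¹ * ↑g) := by noncomm_ring
        _ = x := by rw [Units.inv_mul, one_mul, mul_one]
    haveI : Nontrivial (Matrix (Fin n) (Fin n) E) :=
      ⟨⟨1, 0, hMnontriv⟩⟩
    have hmp1 : minpoly E ((s₁ : Matrix.GeneralLinearGroup (Fin n) E) :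
          Matrix (Fin n) (Fin n) E)
        = minpoly E (((s₁⁻¹ : Matrix.GeneralLinearGroup (Fin n) E) :
          Matrix (Fin n) (Fin n) E).map σ) := by
      have hconj := minpoly_ringHom_map (unitConj g) (unitConj g⁻¹)
        (RingHom.id E) (RingHom.id E) hΦc hΨc hΨΦc (fun c => rfl)
        (((s₁⁻¹ : Matrix.GeneralLinearGroup (Fin n) E) :
          Matrix (Fin n) (Fin n) E).map σ) (hIntM _) (hIntM _)
      rw [Polynomial.map_id, unitConj_apply] at hconj
      rw [← hconj, hg]
    -- field automorphism invariance
    have hΦm : ∀ c : E, (σ.mapMatrix : Matrix (Fin n) (Fin n) E →+* Matrix (Fin n) (Fin n) E)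
        (algebraMap E (Matrix (Fin n) (Fin n) E) c)
        = algebraMap E (Matrix (Fin n) (Fin n) E) (σ c) := by
      intro c
      ext i j
      simp only [RingHom.mapMatrix_apply, Matrix.map_apply, Matrix.algebraMap_matrix_apply]
      split_ifs <;> simp
    have hΨm : ∀ c : E, (((σe.symm : E →+* E)).mapMatrix :
          Matrix (Fin n) (Fin n) E →+* Matrix (Fin n) (Fin n) E)
        (algebraMap E (Matrix (Fin n) (Fin n) E) c)
        = algebraMap E (Matrix (Fin n) (Fin n) E) ((σe.symm : E →+* E) c) := by
      intro c
      ext i j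
      simp only [RingHom.mapMatrix_apply, Matrix.map_apply, Matrix.algebraMap_matrix_apply]
      split_ifs <;> simp
    have hΨΦm : ∀ M : Matrix (Fin n) (Fin n) E,
        (((σe.symm : E →+* E)).mapMatrix :
          Matrix (Fin n) (Fin n) E →+* Matrix (Fin n) (Fin n) E)
        ((σ.mapMatrix : Matrix (Fin n) (Fin n) E →+* Matrix (Fin n) (Fin n) E) M) = M := by
      intro M
      ext i j
      simp only [RingHom.mapMatrix_apply, Matrix.map_apply]
      exact σe.symm_apply_apply _
    have hmp2 : minpoly E (((s₁⁻¹ : Matrix.GeneralLinearGroup (Fin n) E) :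
          Matrix (Fin n) (Fin n) E).map σ)
        = (minpoly E ((s₁⁻¹ : Matrix.GeneralLinearGroup (Fin n) E) :
          Matrix (Fin n) (Fin n) E)).map σ := by
      have h1 := minpoly_ringHom_map (σ.mapMatrix) (((σe.symm : E →+* E)).mapMatrix)
        σ (σe.symm : E →+* E) hΦm hΨm hΨΦm hτυ
        ((s₁⁻¹ : Matrix.GeneralLinearGroup (Fin n) E) : Matrix (Fin n) (Fin n) E)
        (hIntM _) (hIntM _)
      rwa [RingHom.mapMatrix_apply] at h1
    -- transfer to the subalgebra
    have hv1 : minpoly E ((s₁ : Matrix.GeneralLinearGroup (Fin n) E) :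
          Matrix (Fin n) (Fin n) E) = minpoly E lam := by
      rw [show ((s₁ : Matrix.GeneralLinearGroup (Fin n) E) : Matrix (Fin n) (Fin n) E)
          = A.val lam from hMs₁]
      exact minpoly.algHom_eq A.val Subtype.val_injective lam
    have hv2 : minpoly E ((s₁⁻¹ : Matrix.GeneralLinearGroup (Fin n) E) :
          Matrix (Fin n) (Fin n) E) = minpoly E lam' := by
      rw [show ((s₁⁻¹ : Matrix.GeneralLinearGroup (Fin n) E) : Matrix (Fin n) (Fin n) E)
          = A.val lam' from hMs₁inv]
      exact minpoly.algHom_eq A.val Subtype.val_injective lam'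
    have hmKey : minpoly E lam = (minpoly E lam').map σ := by
      rw [← hv1, ← hv2, hmp1, hmp2]
    -- the twisted root
    have hroot : aeval (φ lam') (minpoly E lam) = 0 := by
      rw [hmKey, aeval_ringHom_comm φ σ hφalg, minpoly.aeval, map_zero]
    -- the Frobenius orbit of lam
    set S : Finset ↥A := (Finset.range n).image (fun i => lam ^ q ^ (2 * i)) with hS
    have hφ₂S : ∀ x ∈ S, φ₂ x ∈ S := by
      intro x hx
      simp only [hS, Finset.mem_image, Finset.mem_range] at hx ⊢
      obtain ⟨i, hi, rfl⟩ := hx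
      rw [hφ₂, ← pow_mul]
      by_cases hin : i + 1 < n
      · refine ⟨i + 1, hin, ?_⟩
        rw [show 2 * (i + 1) = 2 * i + 2 by omega, ← pow_add]
      · have hi1 : i + 1 = n := by omega
        refine ⟨0, hn, ?_⟩
        have h1 : q ^ (2 * i) * q ^ 2 = (q ^ 2) ^ n := by
          rw [← pow_add, ← pow_mul]
          congr 1
          omega
        rw [h1, hlampow]
        norm_num
    have hφ₂inj : Function.Injective φ₂ := by
      intro x y hxy
      have h0 : φ₂ (x - y) = 0 := by rw [map_sub, hxy, sub_self]
      rw [hφ₂] at h0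
      have h1 := pow_eq_zero_iff (n := q ^ 2) (by omega) |>.mp h0
      exact sub_eq_zero.mp h1
    have himg : S.image φ₂ = S := by
      apply Finset.eq_of_subset_of_card_le
      · intro y hy
        rw [Finset.mem_image] at hy
        obtain ⟨x, hx, rfl⟩ := hy
        exact hφ₂S x hx
      · rw [Finset.card_image_of_injective _ hφ₂inj]
    set P : Polynomial ↥A := ∏ μ ∈ S, (X - C μ) with hP
    have hPmap : P.map φ₂ = P := by
      have h1 : P.map φ₂ = ∏ μ ∈ S, (X - C (φ₂ μ)) := by
        rw [hP, ← Polynomial.coe_mapRingHom, map_prod]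
        apply Finset.prod_congr rfl
        intro μ _
        simp
      rw [h1]
      have h2 : ∏ μ ∈ S, (X - C (φ₂ μ)) = ∏ ν ∈ S.image φ₂, (X - C ν) :=
        (Finset.prod_image (f := fun ν => X - C ν) (fun x _ y _ h => hφ₂inj h)).symm
      rw [h2, himg]
    have hfixcoef : ∀ k, φ₂ (P.coeff k) = P.coeff k := by
      intro k
      conv_rhs => rw [← hPmap]
      rw [Polynomial.coeff_map]
    have hfix_range : ∀ x : ↥A, φ₂ x = x → x ∈ Set.range (algebraMap E ↥A) := by
      intro x hx
      set h : Polynomial ↥A := X ^ (q ^ 2) - X with hh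
      have hc : h.coeff (q ^ 2) = 1 := by
        rw [hh, Polynomial.coeff_sub, Polynomial.coeff_X_pow, if_pos rfl]
        rw [Polynomial.coeff_X, if_neg (by omega : ¬(1 : ℕ) = q ^ 2), sub_zero]
      have hhne : h ≠ 0 := by
        intro h0
        rw [h0, Polynomial.coeff_zero] at hc
        exact zero_ne_one hc
      have hxr : x ∈ h.roots := by
        rw [Polynomial.mem_roots hhne]
        show h.eval x = 0
        rw [hh, Polynomial.eval_sub, Polynomial.eval_pow, Polynomial.eval_X, ← hφ₂, hx,
          sub_self]
      have hsub : Finset.univ.image (algebraMap E ↥A) ⊆ h.roots.toFinset := by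
        intro y hy
        rw [Finset.mem_image] at hy
        obtain ⟨c, _, rfl⟩ := hy
        rw [Multiset.mem_toFinset, Polynomial.mem_roots hhne]
        show h.eval _ = 0
        rw [hh, Polynomial.eval_sub, Polynomial.eval_pow, Polynomial.eval_X, ← map_pow,
          show c ^ q ^ 2 = c from by rw [← hcard]; exact FiniteField.pow_card c, sub_self]
      have hcard1 : (Finset.univ.image (algebraMap E ↥A)).card = q ^ 2 := by
        rw [Finset.card_image_of_injective _ (RingHom.injective (algebraMap E ↥A)),
          Finset.card_univ, hcard]
      have hcard2 : h.roots.toFinset.card ≤ q ^ 2 := by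
        calc h.roots.toFinset.card ≤ Multiset.card h.roots := h.roots.toFinset_card_le
          _ ≤ h.natDegree := Polynomial.card_roots' h
          _ ≤ q ^ 2 := by
              refine le_trans (Polynomial.natDegree_sub_le _ _) ?_
              rw [Polynomial.natDegree_X_pow, Polynomial.natDegree_X]
              exact max_le (le_refl _) (by omega)
      have heqset : Finset.univ.image (algebraMap E ↥A) = h.roots.toFinset :=
        Finset.eq_of_subset_of_card_le hsub (by rw [hcard1]; exact hcard2)
      have hx2 : x ∈ Finset.univ.image (algebraMap E ↥A) := by
        rw [heqset]
        exact Multiset.mem_toFinset.mpr hxr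
      rw [Finset.mem_image] at hx2
      obtain ⟨c, _, hc'⟩ := hx2
      exact ⟨c, hc'⟩
    obtain ⟨P₀, hP₀⟩ : ∃ P₀ : Polynomial E, P₀.map (algebraMap E ↥A) = P :=
      (Polynomial.mem_lifts _).mp
        ((Polynomial.lifts_iff_coeff_lifts P).mpr (fun k => hfix_range _ (hfixcoef k)))
    have hmdvdP : minpoly E lam ∣ P₀ := by
      apply minpoly.dvd E lam
      rw [Polynomial.aeval_def, ← Polynomial.eval_map, hP₀, hP, Polynomial.eval_prod]
      refine Finset.prod_eq_zero (show lam ∈ S from ?_) (by simp)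
      rw [hS, Finset.mem_image]
      exact ⟨0, Finset.mem_range.mpr hn, by norm_num⟩
    have haevalP : Polynomial.eval (φ lam') P = 0 := by
      obtain ⟨c, hc⟩ := hmdvdP
      have h1 : aeval (φ lam') P₀ = 0 := by rw [hc, map_mul, hroot, zero_mul]
      rwa [Polynomial.aeval_def, ← Polynomial.eval_map, hP₀] at h1
    have hprod : ∃ μ ∈ S, Polynomial.eval (φ lam') (X - C μ) = 0 := by
      apply Finset.prod_eq_zero_iff.mp
      rwa [hP, Polynomial.eval_prod] at haevalP
    obtain ⟨μ, hμS, hμ0⟩ := hprod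
    have hμ : φ lam' = μ := by
      rw [Polynomial.eval_sub, Polynomial.eval_X, Polynomial.eval_C, sub_eq_zero] at hμ0
      exact hμ0
    rw [hS, Finset.mem_image] at hμS
    obtain ⟨i, hi, hμeq⟩ := hμS
    rw [Finset.mem_range] at hi
    have hkey : lam' ^ q = lam ^ q ^ (2 * i) := by rw [← hφ lam', hμ, ← hμeq]
    have hval : t ^ ((q + 1) * b * q) = t ^ ((q + 1) * q ^ (2 * i)) := by
      have h1 := congrArg (Subtype.val) hkey
      rw [SubmonoidClass.coe_pow, SubmonoidClass.coe_pow] at h1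
      rw [show ((lam' : ↥A) : Matrix (Fin n) (Fin n) E) = t ^ ((q + 1) * b) from hlamv',
        show ((lam : ↥A) : Matrix (Fin n) (Fin n) E) = t ^ (q + 1) from hlamv] at h1
      rwa [← pow_mul, ← pow_mul] at h1
    have hmod : (q + 1) * b * q ≡ (q + 1) * q ^ (2 * i) [MOD b + 1] := hst _ _ hval
    have hdvd : b + 1 ∣ (q + 1) * (q ^ (2 * i) + q) := by
      have h2 := hmod.add_right ((q + 1) * q)
      rw [show (q + 1) * b * q + (q + 1) * q = (q + 1) * q * (b + 1) by ring,
        show (q + 1) * q ^ (2 * i) + (q + 1) * q = (q + 1) * (q ^ (2 * i) + q) by ring] at h2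
      have h5 : (q + 1) * q * (b + 1) ≡ 0 [MOD b + 1] :=
        (Nat.modEq_zero_iff_dvd).mpr (dvd_mul_left _ _)
      exact (Nat.modEq_zero_iff_dvd).mp (h2.symm.trans h5)
    exact stmt4_arith hq2 hn hi
      (by rw [show q ^ (2 * n) - 1 = b + 1 from by rw [pow_mul]; exact hb]; exact hdvd)
  · rintro ⟨hn1, hq3⟩
    subst hn1
    refine ⟨1, ?_⟩
    have hq1 : (q + 1) * (q - 1) = (q ^ 2) ^ 1 - 1 := by
      have h1 : (q ^ 2) ^ 1 = q * q := by ring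
      have h2 : (q + 1) * (q - 1) = q * q - 1 := by
        obtain ⟨k, rfl⟩ := Nat.exists_eq_add_of_le hq2
        rw [show 2 + k - 1 = k + 1 by omega]
        have h5 : (2 + k + 1) * (k + 1) + 1 = (2 + k) * (2 + k) := by ring
        omega
      omega
    have hordq : orderOf s₁ ∣ q - 1 := by
      apply orderOf_dvd_of_pow_eq_one
      rw [hs₁, ← pow_mul, hq1, ← hord]
      exact pow_orderOf_eq_one s
    have hdvd2 : orderOf s₁ ∣ 2 := by
      refine dvd_trans hordq ?_
      rcases (show q = 2 ∨ q = 3 by omega) with rfl | rfl <;> norm_num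
    have hs₁sq : s₁ ^ 2 = 1 := orderOf_dvd_iff_pow_eq_one.mp hdvd2
    have hinv : s₁⁻¹ = s₁ := by
      apply inv_eq_of_mul_eq_one_right
      rw [pow_two] at hs₁sq
      exact hs₁sq
    have hq1' : s₁ ^ (q - 1) = 1 := orderOf_dvd_iff_pow_eq_one.mp hordq
    have hM : ((s₁ : Matrix.GeneralLinearGroup (Fin 1) E) :
        Matrix (Fin 1) (Fin 1) E) ^ (q - 1) = 1 := by
      rw [← Units.val_pow_eq_pow_val, hq1', Units.val_one]
    have hentry : (((s₁ : Matrix.GeneralLinearGroup (Fin 1) E) :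
        Matrix (Fin 1) (Fin 1) E) 0 0) ^ (q - 1) = 1 := by
      rw [← pow_entry_one, hM, Matrix.one_apply_eq]
    have hfixed : σ (((s₁ : Matrix.GeneralLinearGroup (Fin 1) E) :
        Matrix (Fin 1) (Fin 1) E) 0 0) = ((s₁ : Matrix.GeneralLinearGroup (Fin 1) E) :
        Matrix (Fin 1) (Fin 1) E) 0 0 := by
      rw [hσ, show q = (q - 1) + 1 by omega, pow_succ, hentry, one_mul]
    rw [inv_one, Units.val_one, one_mul, mul_one, hinv]
    ext i j
    rw [Fin.eq_zero i, Fin.eq_zero j, Matrix.map_apply]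
    exact hfixed
end

section
/- Let G₁ = SL_n(q) with natural module V, let P be the stabilizer of an (n−1)-dimensional subspace W₀ of V, write elements of P in block form with H = {diag(h, det(h)⁻¹) : h ∈ GL_{n−1}(q)} and A the unipotent radical consisting of matrices [[Id_{n−1}, w],[0,1]] with w ∈ W₀. Let T₁ ≤ H correspond to a Singer subgroup S ≤ GL_{n−1}(q) of order q^{n−1}−1, with n ≥ 2 and (n,q) ≠ (2,2),(2,3). Then for every 1 ≠ a ∈ A the centralizer C_{T₁}(a) consists of scalar matrices; equivalently, A \ {1} is a union of regular orbits for T₁/Z(G₁) under conjugation. -/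
open scoped Classical

/-- Let `G₁ = SL_n(q)` (here `n = m + 1`), `P` the stabilizer of an
`(n−1)`-dimensional subspace, `H = {diag(h, det(h)⁻¹)}`, `A` the unipotent radical of
`P`, and let `T₁ ≤ H` correspond to a Singer subgroup `S ≤ GL_{n−1}(q)` of order
`q^{n−1} − 1`, with `n ≥ 2` and `(n,q) ≠ (2,2),(2,3)`.  Then for every `1 ≠ a ∈ A` the
centralizer `C_{T₁}(a)` consists of scalar matrices: if `diag(h, det(h)⁻¹)` with
`h ∈ S` commutes with the element of `A` corresponding to `0 ≠ w`, then `h` is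
scalar. -/
theorem stmt_7 {F : Type} [Field F] [Fintype F] (q : ℕ) (hq : Fintype.card F = q)
    {m : ℕ} (hm : 1 ≤ m) (hexc : ¬ (m + 1 = 2 ∧ (q = 2 ∨ q = 3)))
    (S : Subgroup (Matrix.GeneralLinearGroup (Fin m) F))
    (hScyc : IsCyclic ↥S) (hScard : Nat.card ↥S = q ^ m - 1)
    (hSirr : ∀ W : Submodule F (Fin m → F),
      (∀ s ∈ S, ∀ v ∈ W, ((s : Matrix (Fin m) (Fin m) F)).mulVec v ∈ W) → W = ⊥ ∨ W = ⊤)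
    (h : Matrix.GeneralLinearGroup (Fin m) F) (hh : h ∈ S)
    (w : Fin m → F) (hw : w ≠ 0)
    (hcomm :
      Matrix.fromBlocks ((h : Matrix (Fin m) (Fin m) F)) 0 0
          (Matrix.of fun (_ _ : Unit) => ((h : Matrix (Fin m) (Fin m) F).det)⁻¹) *
        Matrix.fromBlocks 1 (Matrix.of fun (i : Fin m) (_ : Unit) => w i) 0 1 =
      Matrix.fromBlocks 1 (Matrix.of fun (i : Fin m) (_ : Unit) => w i) 0 1 *
        Matrix.fromBlocks ((h : Matrix (Fin m) (Fin m) F)) 0 0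
          (Matrix.of fun (_ _ : Unit) => ((h : Matrix (Fin m) (Fin m) F).det)⁻¹)) :
    ∃ lam : F, (h : Matrix (Fin m) (Fin m) F) = lam • 1 := by
  classical
  set M : Matrix (Fin m) (Fin m) F := (h : Matrix (Fin m) (Fin m) F) with hM
  set μ : F := M.det⁻¹ with hμ
  -- Extract the eigenvector equation from the block commutation
  have key : M.mulVec w = μ • w := by
    funext i
    have := congrFun (congrFun hcomm (Sum.inl i)) (Sum.inr ())
    simp [Matrix.fromBlocks_multiply, Matrix.mul_apply, Matrix.mulVec, dotProduct,
      Fin.sum_univ_succ] at this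
    simpa [Matrix.mulVec, dotProduct, mul_comm] using this
  -- The eigenspace
  let W : Submodule F (Fin m → F) := LinearMap.ker (M.mulVecLin - μ • LinearMap.id)
  have hwW : w ∈ W := by
    simp [W, LinearMap.mem_ker, key]
  have hcommS : ∀ s ∈ S, (s : Matrix (Fin m) (Fin m) F) * M = M * (s : Matrix (Fin m) (Fin m) F) := by
    intro s hs
    haveI := hScyc
    have : (⟨s, hs⟩ : ↥S) * ⟨h, hh⟩ = ⟨h, hh⟩ * ⟨s, hs⟩ :=
      (IsCyclic.commGroup (α := ↥S)).mul_comm _ _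
    have h2 : s * h = h * s := congrArg (Subtype.val) this
    have h3 := congrArg (fun g : Matrix.GeneralLinearGroup (Fin m) F =>
      (g : Matrix (Fin m) (Fin m) F)) h2
    simpa using h3
  have hinv : ∀ s ∈ S, ∀ v ∈ W, ((s : Matrix (Fin m) (Fin m) F)).mulVec v ∈ W := by
    intro s hs v hv
    simp only [W, LinearMap.mem_ker, LinearMap.sub_apply, Matrix.mulVecLin_apply,
      LinearMap.smul_apply, LinearMap.id_apply, sub_eq_zero] at hv ⊢
    calc M.mulVec ((s : Matrix (Fin m) (Fin m) F).mulVec v)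
        = (M * (s : Matrix (Fin m) (Fin m) F)).mulVec v := by rw [Matrix.mulVec_mulVec]
      _ = ((s : Matrix (Fin m) (Fin m) F) * M).mulVec v := by rw [hcommS s hs]
      _ = (s : Matrix (Fin m) (Fin m) F).mulVec (M.mulVec v) := by rw [Matrix.mulVec_mulVec]
      _ = (s : Matrix (Fin m) (Fin m) F).mulVec (μ • v) := by rw [hv]
      _ = μ • (s : Matrix (Fin m) (Fin m) F).mulVec v := by
          rw [Matrix.mulVec_smul]
  have hWtop : W = ⊤ := by
    rcases hSirr W hinv with hbot | htop
    · exact absurd (hbot ▸ hwW) (by simpa using hw)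
    · exact htop
  refine ⟨μ, ?_⟩
  have hall : ∀ v : Fin m → F, M.mulVec v = μ • v := by
    intro v
    have : v ∈ W := hWtop ▸ Submodule.mem_top
    simpa [W, LinearMap.mem_ker, sub_eq_zero] using this
  ext i j
  have := congrFun (hall (Pi.single j 1)) i
  simpa [Matrix.mulVec_single, Matrix.one_apply, Pi.single_apply, mul_comm] using this
end

section
/- Let V be a 2n-dimensional unitary space over F_{q²} (or orthogonal of Witt index n over F_q, with appropriate Gram matrix [[0,I],[I,0]]), let X = diag(x, σ(xᵗ)⁻¹) where x ∈ GL_n(r) is irreducible of maximal order subject to X ∈ G(V), and T = ⟨X⟩, excluding the small exceptional cases of Lemma on Singer cycles. Then T is self-centralizing in G(V): C_{G(V)}(X) = T, and in particular C_{G(V)}(X) is cyclic. -/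
open scoped Classical

-- zero matrix from vanishing mulVec
lemma stmt8_eq_zero_of_mulVec {E : Type} [Field E] {n : ℕ}
    (M : Matrix (Fin n) (Fin n) E) (h : ∀ v, M.mulVec v = 0) : M = 0 := by
  ext i j
  have := congrFun (h (Pi.single j 1)) i
  rw [Matrix.mulVec_single] at this
  simpa using this

-- kernel argument
lemma stmt8_ker_arg {E : Type} [Field E] {n : ℕ}
    (x z m : Matrix (Fin n) (Fin n) E)
    (hxirr : ∀ W : Submodule E (Fin n → E),
      (∀ v ∈ W, x.mulVec v ∈ W) → W = ⊥ ∨ W = ⊤)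
    (h : m * x = z * m) : m = 0 ∨ Function.Injective m.mulVecLin := by
  rcases hxirr (LinearMap.ker m.mulVecLin) (by
    intro v hv
    rw [LinearMap.mem_ker, Matrix.mulVecLin_apply] at hv ⊢
    rw [Matrix.mulVec_mulVec, h, ← Matrix.mulVec_mulVec, hv, Matrix.mulVec_zero]) with hbot | htop
  · right; exact LinearMap.ker_eq_bot.mp hbot
  · left
    apply stmt8_eq_zero_of_mulVec
    intro v
    have : v ∈ LinearMap.ker m.mulVecLin := htop ▸ Submodule.mem_top
    simpa [Matrix.mulVecLin_apply] using this

-- injective mulVecLin of a square matrix gives a unit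
lemma stmt8_isUnit_of_inj {E : Type} [Field E] {n : ℕ}
    (m : Matrix (Fin n) (Fin n) E) (h : Function.Injective m.mulVecLin) : IsUnit m := by
  have he : (Matrix.toLinAlgEquiv' m : (Fin n → E) →ₗ[E] (Fin n → E)) = m.mulVecLin :=
    LinearMap.ext fun v => by rw [Matrix.toLinAlgEquiv'_apply, Matrix.mulVecLin_apply]
  have h1 : IsUnit (Matrix.toLinAlgEquiv' m) := by
    rw [LinearMap.isUnit_iff_ker_eq_bot, he, LinearMap.ker_eq_bot]
    exact h
  have h2 := h1.map (Matrix.toLinAlgEquiv' (n := Fin n) (R := E)).symm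
  rwa [AlgEquiv.symm_apply_apply] at h2

-- surjective mulVecLin of a square matrix gives a unit
lemma stmt8_isUnit_of_surj {E : Type} [Field E] {n : ℕ}
    (m : Matrix (Fin n) (Fin n) E) (h : Function.Surjective m.mulVecLin) : IsUnit m :=
  stmt8_isUnit_of_inj m ((LinearMap.injective_iff_surjective (f := m.mulVecLin)).mpr h)

-- transpose of σ-map commutes with powers
lemma stmt8_fpow {E : Type} [Field E] {ι : Type} [Fintype ι] [DecidableEq ι]
    (σ : E →+* E) (M : Matrix ι ι E) (k : ℕ) :
    ((M ^ k).map σ).transpose = ((M.map σ).transpose) ^ k := by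
  induction k with
  | zero => simp [Matrix.map_one σ (map_zero σ) (map_one σ)]
  | succ k ih =>
    rw [pow_succ, Matrix.map_mul, Matrix.transpose_mul, ih, ← pow_succ']

-- powers of block diagonal matrices
lemma stmt8_fromBlocks_pow {E : Type} [Field E] {ι : Type} [Fintype ι] [DecidableEq ι]
    (A D : Matrix ι ι E) (k : ℕ) :
    (Matrix.fromBlocks A 0 0 D) ^ k = Matrix.fromBlocks (A ^ k) 0 0 (D ^ k) := by
  induction k with
  | zero => simp [Matrix.fromBlocks_one]
  | succ k ih =>
    rw [pow_succ, pow_succ, pow_succ, ih, Matrix.fromBlocks_multiply]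
    simp

-- the block-diagonal matrix of any unit satisfies the Gram relation
lemma stmt8_blocksG {E : Type} [Field E] {n : ℕ}
    (σ : E →+* E) (hσ2 : ∀ x : E, σ (σ x) = x)
    (u : Matrix.GeneralLinearGroup (Fin n) E) :
    Matrix.fromBlocks (u : Matrix (Fin n) (Fin n) E) 0 0
        ((((u⁻¹ : Matrix.GeneralLinearGroup (Fin n) E) :
            Matrix (Fin n) (Fin n) E)).map σ).transpose *
      (Matrix.fromBlocks 0 1 1 0 : Matrix (Fin n ⊕ Fin n) (Fin n ⊕ Fin n) E) *
      ((Matrix.fromBlocks (u : Matrix (Fin n) (Fin n) E) 0 0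
        ((((u⁻¹ : Matrix.GeneralLinearGroup (Fin n) E) :
            Matrix (Fin n) (Fin n) E)).map σ).transpose).map σ).transpose =
      (Matrix.fromBlocks 0 1 1 0 : Matrix (Fin n ⊕ Fin n) (Fin n ⊕ Fin n) E) := by
  set A : Matrix (Fin n) (Fin n) E := (u : Matrix (Fin n) (Fin n) E) with hA
  set B : Matrix (Fin n) (Fin n) E :=
    ((u⁻¹ : Matrix.GeneralLinearGroup (Fin n) E) : Matrix (Fin n) (Fin n) E) with hB
  have hAB : A * B = 1 := by
    rw [hA, hB, ← Units.val_mul, mul_inv_cancel, Units.val_one]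
  have hBA : B * A = 1 := by
    rw [hA, hB, ← Units.val_mul, inv_mul_cancel, Units.val_one]
  have hmapmap : ∀ M : Matrix (Fin n) (Fin n) E, (M.map σ).map σ = M := by
    intro M; rw [Matrix.map_map]
    have : (σ : E → E) ∘ (σ : E → E) = id := funext hσ2
    rw [this, Matrix.map_id]
  have h1 : ((B.map σ).transpose.map σ).transpose = B := by
    rw [Matrix.transpose_map, Matrix.transpose_transpose, hmapmap]
  have hmap0 : ((0 : Matrix (Fin n) (Fin n) E).map σ) = 0 := Matrix.map_zero _ (map_zero σ)
  have e1 : A * ((B.map σ).transpose.map σ).transpose = 1 := by rw [h1, hAB]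
  have e2 : (B.map σ).transpose * (A.map σ).transpose = 1 := by
    rw [← Matrix.transpose_mul, ← Matrix.map_mul, hAB, Matrix.map_one σ (map_zero σ) (map_one σ),
      Matrix.transpose_one]
  rw [Matrix.fromBlocks_map, hmap0, Matrix.fromBlocks_transpose, Matrix.transpose_zero,
    Matrix.fromBlocks_multiply, Matrix.fromBlocks_multiply]
  simp only [Matrix.mul_zero, Matrix.zero_mul, Matrix.mul_one, Matrix.one_mul, add_zero, zero_add,
    Matrix.zero_mul, e1, e2]

set_option maxHeartbeats 2000000 in
lemma stmt8_singer {E : Type} [Field E] [Fintype E] {n : ℕ} (hn : 0 < n) :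
    ∃ y : Matrix.GeneralLinearGroup (Fin n) E,
      (∀ W : Submodule E (Fin n → E),
        (∀ v ∈ W, ((y : Matrix (Fin n) (Fin n) E)).mulVec v ∈ W) → W = ⊥ ∨ W = ⊤) ∧
      Fintype.card E ^ n - 1 ≤ orderOf y := by
  obtain ⟨p, hcp⟩ := CharP.exists E
  haveI : CharP E p := hcp
  obtain ⟨d, hprime, hcard⟩ := FiniteField.card E p
  haveI : Fact (Nat.Prime p) := ⟨hprime⟩
  set q := Fintype.card E with hq
  set m := q ^ n with hm
  have hq2 : 2 ≤ q := Fintype.one_lt_card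
  have hm2 : 2 ≤ m := le_trans hq2 (Nat.le_self_pow hn.ne' q)
  have hmp : m = p ^ (d * n) := by rw [hm, hcard, pow_mul]
  set L := AlgebraicClosure E
  haveI : CharP L p := charP_of_injective_algebraMap (algebraMap E L).injective p
  -- the subfield of `L` of elements with `x ^ m = x`
  have hsub : ∀ a b : L, a ^ m = a → b ^ m = b → (a - b) ^ m = a - b := by
    intro a b ha hb; rw [hmp, sub_pow_char_pow, ← hmp, ha, hb]
  let F : Subfield L :=
    { carrier := {z : L | z ^ m = z}
      one_mem' := one_pow m
      zero_mem' := zero_pow (by omega)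
      mul_mem' := by intro a b ha hb; simp only [Set.mem_setOf_eq] at *; rw [mul_pow, ha, hb]
      add_mem' := by
        intro a b ha hb; simp only [Set.mem_setOf_eq] at *
        rw [hmp] at ha hb ⊢; rw [add_pow_char_pow, ha, hb]
      neg_mem' := by
        intro a ha; simp only [Set.mem_setOf_eq] at *
        have := hsub 0 a (zero_pow (by omega)) ha; simpa using this
      inv_mem' := by
        intro a ha; simp only [Set.mem_setOf_eq] at *
        rcases eq_or_ne a 0 with rfl | h
        · simp [zero_pow (show m ≠ 0 by omega)]
        · rw [inv_pow, ha] }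
  -- `F` equals the root set of `X^m - X`
  set g : Polynomial E := Polynomial.X ^ m - Polynomial.X with hg
  have hgdeg : g.natDegree = m := by
    rw [hg, Polynomial.natDegree_sub_eq_left_of_natDegree_lt, Polynomial.natDegree_X_pow]
    rw [Polynomial.natDegree_X_pow, Polynomial.natDegree_X]; omega
  have hgne : g ≠ 0 := by
    intro h; rw [h] at hgdeg; simp at hgdeg; omega
  have hFset : (F : Set L) = g.rootSet L := by
    ext z
    rw [Polynomial.mem_rootSet]
    simp only [SetLike.mem_coe, hg, map_sub, Polynomial.aeval_X_pow, Polynomial.aeval_X]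
    constructor
    · intro hz; exact ⟨hgne, by rw [show z ^ m = z from hz, sub_self]⟩
    · intro ⟨_, hz⟩; exact sub_eq_zero.mp hz
  have hsep : g.Separable := by
    have : p ∣ m := hmp ▸ dvd_pow_self p (by positivity)
    exact galois_poly_separable p m this
  have hcardroot : Fintype.card (g.rootSet L) = m := by
    rw [Polynomial.card_rootSet_eq_natDegree hsep (IsAlgClosed.splits _), hgdeg]
  letI : Fintype F := Fintype.ofEquiv _ (Equiv.setCongr hFset).symm
  have hcardF : Fintype.card F = m := by
    rw [← hcardroot]; exact Fintype.card_congr (Equiv.setCongr hFset)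
  -- algebra structure
  have hmemE : ∀ a : E, algebraMap E L a ∈ F := by
    intro a
    show algebraMap E L a ^ m = algebraMap E L a
    rw [← map_pow]; exact congrArg _ (FiniteField.pow_card_pow n a)
  let emb : E →+* F :=
    { toFun := fun a => ⟨algebraMap E L a, hmemE a⟩
      map_one' := by ext; simp
      map_mul' := by intro a b; ext; simp
      map_zero' := by ext; simp
      map_add' := by intro a b; ext; simp }
  letI : Algebra E F := emb.toAlgebra
  letI : Module.Finite E F := Module.Finite.of_finite
  have hrank : Module.finrank E F = n := by
    have h1 : Fintype.card F = q ^ Module.finrank E F := Module.card_eq_pow_finrank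
    rw [hcardF, hm] at h1
    exact (Nat.pow_right_injective hq2 h1).symm
  let b : Module.Basis (Fin n) E F := Module.finBasisOfFinrankEq E F hrank
  -- a generator of `Fˣ`
  obtain ⟨ζ, hζ⟩ := IsCyclic.exists_monoid_generator (α := Fˣ)
  have hζord : orderOf ζ = m - 1 := by
    rw [orderOf_eq_card_of_forall_mem_zpowers
      (fun u => ((isOfFinOrder_of_finite ζ).mem_powers_iff_mem_zpowers).mp (hζ u)),
      Nat.card_eq_fintype_card, Fintype.card_units, hcardF]
  -- the matrix
  haveI : Nonempty (Fin n) := ⟨⟨0, hn⟩⟩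
  let φ := Algebra.leftMulMatrix b
  have hφinj : Function.Injective φ := RingHom.injective (φ : F →+* Matrix (Fin n) (Fin n) E)
  let y : Matrix.GeneralLinearGroup (Fin n) E := Units.map (φ : F →* Matrix (Fin n) (Fin n) E) ζ
  have hyval : (y : Matrix (Fin n) (Fin n) E) = φ (ζ : F) := rfl
  have hyord : orderOf y = m - 1 := by
    rw [← hζord]
    exact orderOf_injective _ (Units.map_injective hφinj) ζ
  refine ⟨y, ?_, by rw [hyord]⟩
  -- irreducibility
  intro W hW
  -- key mulVec identity
  have hkey : ∀ (f : F) (w : F), (φ f).mulVec (b.equivFun w) = b.equivFun (f * w) := by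
    intro f w
    rw [b.equivFun_apply, b.equivFun_apply]
    exact Algebra.leftMulMatrix_mulVec_repr b f w
  set W' : Submodule E F := W.comap b.equivFun.toLinearMap with hW'
  have hmemW' : ∀ w : F, w ∈ W' ↔ b.equivFun w ∈ W := fun w => Iff.rfl
  have hζW' : ∀ w ∈ W', (ζ : F) * w ∈ W' := by
    intro w hw
    rw [hmemW', ← hkey]
    exact hW _ ((hmemW' w).mp hw)
  have hsmul : ∀ (f : F), ∀ w ∈ W', f * w ∈ W' := by
    intro f w hw
    rcases eq_or_ne f 0 with rfl | hf
    · rw [zero_mul]; exact W'.zero_mem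
    · obtain ⟨k, hk⟩ := hζ (Units.mk0 f hf)
      have hk' : ζ ^ k = Units.mk0 f hf := hk
      have hfk : f = ((ζ : ↥F)) ^ k := by
        have := congrArg Units.val hk'
        rw [Units.val_pow_eq_pow_val] at this
        exact this.symm
      rw [hfk]
      clear hk hk' hfk
      induction k with
      | zero => simpa using hw
      | succ k ih =>
        rw [pow_succ, mul_comm ((ζ:F)^k), mul_assoc]
        exact hζW' _ ih
  let I : Submodule F F :=
    { carrier := {w : F | w ∈ W'}
      add_mem' := fun ha hb => W'.add_mem ha hb
      zero_mem' := W'.zero_mem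
      smul_mem' := fun c w hw => hsmul c w hw }
  have hIW' : ∀ w : F, w ∈ I ↔ w ∈ W' := fun w => Iff.rfl
  rcases Ideal.eq_bot_or_top I with hbot | htop
  · left
    rw [Submodule.eq_bot_iff]
    intro v hv
    have h1 : b.equivFun.symm v ∈ I := by
      rw [hIW', hmemW', b.equivFun.apply_symm_apply]; exact hv
    rw [hbot, Submodule.mem_bot] at h1
    have h2 : v = b.equivFun 0 := by rw [← h1, b.equivFun.apply_symm_apply]
    rw [h2, LinearEquiv.map_zero]
  · right
    rw [Submodule.eq_top_iff']
    intro v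
    have h1 : b.equivFun.symm v ∈ I := htop ▸ Submodule.mem_top
    rw [hIW', hmemW', b.equivFun.apply_symm_apply] at h1
    exact h1

set_option maxHeartbeats 1000000

/-- Let `V` be a `2n`-dimensional unitary (or hyperbolic orthogonal)
space with Gram matrix `Γ = [[0,I],[I,0]]`, let `X = diag(x, σ(xᵗ)⁻¹)` where
`x ∈ GL_n(r)` is irreducible of maximal order subject to `X ∈ G(V)`, and `T = ⟨X⟩`,
excluding the small exceptional cases (where the representations `X ↦ x` and
`X ↦ σ(xᵗ)⁻¹` are equivalent).  Then `T` is self-centralizing in `G(V)`: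
`C_{G(V)}(X) = T`. -/
theorem stmt_8 {E : Type} [Field E] [Fintype E] {n : ℕ} (hn : 0 < n)
    (σ : E →+* E) (hσ2 : ∀ x : E, σ (σ x) = x)
    (x : Matrix.GeneralLinearGroup (Fin n) E)
    (hxirr : ∀ W : Submodule E (Fin n → E),
      (∀ v ∈ W, ((x : Matrix (Fin n) (Fin n) E)).mulVec v ∈ W) → W = ⊥ ∨ W = ⊤)
    (Γ : Matrix (Fin n ⊕ Fin n) (Fin n ⊕ Fin n) E)
    (hΓ : Γ = Matrix.fromBlocks 0 1 1 0)
    (Xm : Matrix (Fin n ⊕ Fin n) (Fin n ⊕ Fin n) E)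
    (hXm : Xm = Matrix.fromBlocks (x : Matrix (Fin n) (Fin n) E) 0 0
        ((((x⁻¹ : Matrix.GeneralLinearGroup (Fin n) E) :
            Matrix (Fin n) (Fin n) E)).map σ).transpose)
    (hXG : Xm * Γ * (Xm.map σ).transpose = Γ)
    -- `x` has maximal order among irreducible elements `y` whose analogous
    -- block matrix lies in `G(V)`:
    (hmax : ∀ y : Matrix.GeneralLinearGroup (Fin n) E,
      (∀ W : Submodule E (Fin n → E),
        (∀ v ∈ W, ((y : Matrix (Fin n) (Fin n) E)).mulVec v ∈ W) → W = ⊥ ∨ W = ⊤) →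
      (Matrix.fromBlocks (y : Matrix (Fin n) (Fin n) E) 0 0
          ((((y⁻¹ : Matrix.GeneralLinearGroup (Fin n) E) :
              Matrix (Fin n) (Fin n) E)).map σ).transpose * Γ *
          ((Matrix.fromBlocks (y : Matrix (Fin n) (Fin n) E) 0 0
            ((((y⁻¹ : Matrix.GeneralLinearGroup (Fin n) E) :
                Matrix (Fin n) (Fin n) E)).map σ).transpose).map σ).transpose = Γ) →
      orderOf y ≤ orderOf x)
    -- excluding the exceptional cases: the two diagonal-block representations
    -- are inequivalent:
    (hneq : ¬ ∃ g : Matrix.GeneralLinearGroup (Fin n) E,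
      (g : Matrix (Fin n) (Fin n) E) * (x : Matrix (Fin n) (Fin n) E) *
          ((g⁻¹ : Matrix.GeneralLinearGroup (Fin n) E) : Matrix (Fin n) (Fin n) E) =
        ((((x⁻¹ : Matrix.GeneralLinearGroup (Fin n) E) :
            Matrix (Fin n) (Fin n) E)).map σ).transpose) :
    ∀ g : Matrix.GeneralLinearGroup (Fin n ⊕ Fin n) E,
      (g : Matrix (Fin n ⊕ Fin n) (Fin n ⊕ Fin n) E) * Γ *
          (((g : Matrix (Fin n ⊕ Fin n) (Fin n ⊕ Fin n) E)).map σ).transpose = Γ →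
      (((g : Matrix (Fin n ⊕ Fin n) (Fin n ⊕ Fin n) E) * Xm =
          Xm * (g : Matrix (Fin n ⊕ Fin n) (Fin n ⊕ Fin n) E)) ↔
        ∃ k : ℕ, (g : Matrix (Fin n ⊕ Fin n) (Fin n ⊕ Fin n) E) = Xm ^ k) := by
  intro g hgG
  set xm : Matrix (Fin n) (Fin n) E := (x : Matrix (Fin n) (Fin n) E) with hxmdef
  set ym : Matrix (Fin n) (Fin n) E :=
    ((((x⁻¹ : Matrix.GeneralLinearGroup (Fin n) E) :
      Matrix (Fin n) (Fin n) E)).map σ).transpose with hymdef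
  constructor
  swap
  · rintro ⟨k, hk⟩
    rw [hk]
    exact pow_mul_comm' Xm k
  intro hcomm
  set gm : Matrix (Fin n ⊕ Fin n) (Fin n ⊕ Fin n) E :=
    (g : Matrix (Fin n ⊕ Fin n) (Fin n ⊕ Fin n) E) with hgmdef
  set a := gm.toBlocks₁₁ with hadef
  set b := gm.toBlocks₁₂ with hbdef
  set c := gm.toBlocks₂₁ with hcdef
  set d := gm.toBlocks₂₂ with hddef
  have hgb : gm = Matrix.fromBlocks a b c d := (Matrix.fromBlocks_toBlocks gm).symm
  -- commutation equations
  have hcomm' : Matrix.fromBlocks (a*xm) (b*ym) (c*xm) (d*ym)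
      = Matrix.fromBlocks (xm*a) (xm*b) (ym*c) (ym*d) := by
    have h := hcomm
    rw [hgb, hXm, Matrix.fromBlocks_multiply, Matrix.fromBlocks_multiply] at h
    simpa using h
  have hax : a * xm = xm * a := by
    have := congrArg Matrix.toBlocks₁₁ hcomm'
    simpa [Matrix.toBlocks_fromBlocks₁₁] using this
  have hbeq : b * ym = xm * b := by
    have := congrArg Matrix.toBlocks₁₂ hcomm'
    simpa [Matrix.toBlocks_fromBlocks₁₂] using this
  have hceq : c * xm = ym * c := by
    have := congrArg Matrix.toBlocks₂₁ hcomm'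
    simpa [Matrix.toBlocks_fromBlocks₂₁] using this
  -- c = 0
  have hc0 : c = 0 := by
    rcases stmt8_ker_arg xm ym c hxirr hceq with h0 | hinj
    · exact h0
    · exfalso
      obtain ⟨u, hu⟩ := stmt8_isUnit_of_inj c hinj
      refine hneq ⟨u, ?_⟩
      have h1 : (u : Matrix (Fin n) (Fin n) E) * xm * ((u⁻¹ : (Matrix (Fin n) (Fin n) E)ˣ) :
          Matrix (Fin n) (Fin n) E) = ym := by
        rw [hu, hceq, mul_assoc]
        rw [show c * ((u⁻¹ : (Matrix (Fin n) (Fin n) E)ˣ) : Matrix (Fin n) (Fin n) E)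
            = ((u * u⁻¹ : (Matrix (Fin n) (Fin n) E)ˣ) : Matrix (Fin n) (Fin n) E) by
          rw [Units.val_mul, hu]]
        rw [mul_inv_cancel, Units.val_one, mul_one]
      exact h1
  -- b = 0
  have hb0 : b = 0 := by
    have hinvr : ∀ v ∈ LinearMap.range b.mulVecLin, xm.mulVec v ∈ LinearMap.range b.mulVecLin := by
      intro v hv
      obtain ⟨w, hw⟩ := hv
      refine ⟨ym.mulVec w, ?_⟩
      rw [Matrix.mulVecLin_apply] at hw ⊢
      rw [Matrix.mulVec_mulVec, hbeq, ← Matrix.mulVec_mulVec, hw]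
    rcases hxirr (LinearMap.range b.mulVecLin) hinvr with hbot | htop
    · apply stmt8_eq_zero_of_mulVec
      intro v
      have : b.mulVecLin v ∈ LinearMap.range b.mulVecLin := LinearMap.mem_range_self _ v
      rw [hbot, Submodule.mem_bot] at this
      simpa [Matrix.mulVecLin_apply] using this
    · exfalso
      have hsurj : Function.Surjective b.mulVecLin := LinearMap.range_eq_top.mp htop
      obtain ⟨u, hu⟩ := stmt8_isUnit_of_surj b hsurj
      refine hneq ⟨u⁻¹, ?_⟩
      have hxu : xm * (u : Matrix (Fin n) (Fin n) E) = (u : Matrix (Fin n) (Fin n) E) * ym := by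
        rw [hu]; exact hbeq.symm
      have h1 : ((u⁻¹ : (Matrix (Fin n) (Fin n) E)ˣ) : Matrix (Fin n) (Fin n) E) * xm *
          (((u⁻¹)⁻¹ : (Matrix (Fin n) (Fin n) E)ˣ) : Matrix (Fin n) (Fin n) E) = ym := by
        have h2 : ((u⁻¹ : (Matrix (Fin n) (Fin n) E)ˣ) : Matrix (Fin n) (Fin n) E) *
            ((u : Matrix (Fin n) (Fin n) E) * ym) = ym := by
          rw [← mul_assoc, ← Units.val_mul, inv_mul_cancel, Units.val_one, one_mul]
        rw [inv_inv, mul_assoc, hxu]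
        exact h2
      exact h1
  -- Gram equations for the diagonal blocks
  have hmap0 : ((0 : Matrix (Fin n) (Fin n) E).map σ) = 0 := Matrix.map_zero _ (map_zero σ)
  have hgG' := hgG
  rw [hgb, hb0, hc0, hΓ, Matrix.fromBlocks_map, hmap0, Matrix.fromBlocks_transpose,
    Matrix.transpose_zero, Matrix.fromBlocks_multiply, Matrix.fromBlocks_multiply] at hgG'
  simp only [Matrix.mul_zero, Matrix.zero_mul, Matrix.mul_one, Matrix.one_mul, add_zero,
    zero_add] at hgG'
  have ha1 : a * ((d.map σ).transpose) = 1 := by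
    have := congrArg Matrix.toBlocks₁₂ hgG'
    simpa [Matrix.toBlocks_fromBlocks₁₂] using this
  have hd1 : d * ((a.map σ).transpose) = 1 := by
    have := congrArg Matrix.toBlocks₂₁ hgG'
    simpa [Matrix.toBlocks_fromBlocks₂₁] using this
  -- `a` as an element of the general linear group
  set au : Matrix.GeneralLinearGroup (Fin n) E :=
    ⟨a, (d.map σ).transpose, ha1, mul_eq_one_comm.mp ha1⟩ with haudef
  -- the centralizer subgroup
  set U : Subgroup (Matrix.GeneralLinearGroup (Fin n) E) := Subgroup.centralizer {x} with hUdef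
  have hxU : x ∈ U := Subgroup.mem_centralizer_iff.mpr (by
    rintro h hh
    rw [Set.mem_singleton_iff] at hh
    rw [hh])
  have hauU : au ∈ U := Subgroup.mem_centralizer_iff.mpr (by
    rintro h hh
    rw [Set.mem_singleton_iff] at hh
    subst hh
    apply Units.ext
    rw [Units.val_mul, Units.val_mul]
    exact hax.symm)
  -- the lower bound on the order of x from the Singer element
  obtain ⟨ys, hysirr, hysord⟩ := stmt8_singer (E := E) hn
  have hordx : Fintype.card E ^ n - 1 ≤ orderOf x :=
    le_trans hysord (hmax ys hysirr (by rw [hΓ]; exact stmt8_blocksG σ hσ2 ys))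
  -- the cardinality bound on the centralizer
  set v₀ : Fin n → E := Pi.single (⟨0, hn⟩ : Fin n) (1 : E) with hv₀def
  have hv₀ : v₀ ≠ 0 := by
    intro h
    have := congrFun h (⟨0, hn⟩ : Fin n)
    rw [hv₀def, Pi.single_eq_same] at this
    exact one_ne_zero this
  have hcardU : Nat.card U ≤ Fintype.card E ^ n - 1 := by
    have hmm : ∀ u : U, ((u : Matrix.GeneralLinearGroup (Fin n) E) :
        Matrix (Fin n) (Fin n) E) * xm = xm * ((u : Matrix.GeneralLinearGroup (Fin n) E) :
        Matrix (Fin n) (Fin n) E) := by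
      intro u
      have h2 := Subgroup.mem_centralizer_iff.mp u.2 x (Set.mem_singleton x)
      have h3 := congrArg Units.val h2
      rw [Units.val_mul, Units.val_mul] at h3
      exact h3.symm
    have hinj : Function.Injective (fun u : U =>
        (⟨((u : Matrix.GeneralLinearGroup (Fin n) E) : Matrix (Fin n) (Fin n) E).mulVec v₀, by
          intro h0
          have h1 : ((((u : Matrix.GeneralLinearGroup (Fin n) E)⁻¹ :
              Matrix.GeneralLinearGroup (Fin n) E) : Matrix (Fin n) (Fin n) E)).mulVec
              ((((u : Matrix.GeneralLinearGroup (Fin n) E)) :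
              Matrix (Fin n) (Fin n) E).mulVec v₀) = v₀ := by
            rw [Matrix.mulVec_mulVec, ← Units.val_mul, inv_mul_cancel, Units.val_one,
              Matrix.one_mulVec]
          rw [h0, Matrix.mulVec_zero] at h1
          exact hv₀ h1.symm⟩ : {v : Fin n → E // v ≠ 0})) := by
      intro u₁ u₂ h
      have h' : (((u₁ : Matrix.GeneralLinearGroup (Fin n) E)) :
          Matrix (Fin n) (Fin n) E).mulVec v₀ =
          (((u₂ : Matrix.GeneralLinearGroup (Fin n) E)) :
          Matrix (Fin n) (Fin n) E).mulVec v₀ := congrArg Subtype.val h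
      set m : Matrix (Fin n) (Fin n) E :=
        (((u₁ : Matrix.GeneralLinearGroup (Fin n) E)) : Matrix (Fin n) (Fin n) E) -
        (((u₂ : Matrix.GeneralLinearGroup (Fin n) E)) : Matrix (Fin n) (Fin n) E) with hmdef
      have hmx : m * xm = xm * m := by
        rw [hmdef, Matrix.sub_mul, Matrix.mul_sub, hmm u₁, hmm u₂]
      have hm0 : m.mulVec v₀ = 0 := by
        rw [hmdef, Matrix.sub_mulVec, h', sub_self]
      rcases stmt8_ker_arg xm xm m hxirr hmx with hz | hinj'
      · have : (((u₁ : Matrix.GeneralLinearGroup (Fin n) E)) : Matrix (Fin n) (Fin n) E) =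
            (((u₂ : Matrix.GeneralLinearGroup (Fin n) E)) : Matrix (Fin n) (Fin n) E) := by
          have := sub_eq_zero.mp (hmdef ▸ hz)
          exact this
        exact Subtype.ext (Units.ext this)
      · exfalso
        apply hv₀
        have h2 : m.mulVecLin v₀ = m.mulVecLin 0 := by
          rw [Matrix.mulVecLin_apply, Matrix.mulVecLin_apply, hm0, Matrix.mulVec_zero]
        exact hinj' h2
    have h3 : Nat.card U ≤ Nat.card {v : Fin n → E // v ≠ 0} :=
      Nat.card_le_card_of_injective _ hinj
    have h4 : Nat.card {v : Fin n → E // v ≠ 0} = Fintype.card E ^ n - 1 := by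
      rw [Nat.card_eq_fintype_card]
      have h5 : Fintype.card {v : Fin n → E // ¬ v = 0} =
          Fintype.card (Fin n → E) - Fintype.card {v : Fin n → E // v = 0} :=
        Fintype.card_subtype_compl _
      have h6 : Fintype.card {v : Fin n → E // v ≠ 0} =
          Fintype.card {v : Fin n → E // ¬ v = 0} :=
        Fintype.card_congr (Equiv.subtypeEquivRight (fun v => Iff.rfl))
      rw [h6, h5, Fintype.card_subtype_eq (0 : Fin n → E), Fintype.card_fun, Fintype.card_fin]
    rw [← h4]; exact h3
  have hUzp : Subgroup.zpowers x = U := by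
    apply Subgroup.eq_of_le_of_card_ge (Subgroup.zpowers_le.mpr hxU)
    rw [Nat.card_zpowers]
    exact le_trans hcardU hordx
  -- au is a power of x
  have hauzp : au ∈ Subgroup.zpowers x := hUzp ▸ hauU
  have haup : au ∈ Submonoid.powers x :=
    ((isOfFinOrder_of_finite x).mem_powers_iff_mem_zpowers).mpr hauzp
  obtain ⟨k, hk⟩ := haup
  have hk' : x ^ k = au := hk
  -- conclude
  refine ⟨k, ?_⟩
  have hak : a = xm ^ k := by
    have := congrArg Units.val hk'
    rw [Units.val_pow_eq_pow_val] at this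
    exact this.symm
  -- identify d with ym ^ k
  have hyxσ : ym * ((xm.map σ).transpose) = 1 := by
    rw [hymdef, ← Matrix.transpose_mul, ← Matrix.map_mul, ← Units.val_mul, mul_inv_cancel,
      Units.val_one, Matrix.map_one σ (map_zero σ) (map_one σ), Matrix.transpose_one]
  have hxσy : ((xm.map σ).transpose) * ym = 1 := mul_eq_one_comm.mp hyxσ
  have hdk : d = ym ^ k := by
    have hda : d * ((xm.map σ).transpose) ^ k = 1 := by
      have := hd1
      rw [hak, stmt8_fpow] at this
      exact this
    have hyk : (ym ^ k) * ((xm.map σ).transpose) ^ k = 1 := by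
      set su : (Matrix (Fin n) (Fin n) E)ˣ := ⟨(xm.map σ).transpose, ym, hxσy, hyxσ⟩ with hsudef
      have h7 : ((su⁻¹ ^ k * su ^ k : (Matrix (Fin n) (Fin n) E)ˣ) :
          Matrix (Fin n) (Fin n) E) = 1 := by
        rw [inv_pow, inv_mul_cancel, Units.val_one]
      rw [Units.val_mul, Units.val_pow_eq_pow_val, Units.val_pow_eq_pow_val] at h7
      exact h7
    have hky : ((xm.map σ).transpose) ^ k * (ym ^ k) = 1 := mul_eq_one_comm.mp hyk
    calc d = d * (((xm.map σ).transpose) ^ k * (ym ^ k)) := by rw [hky, mul_one]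
      _ = (d * ((xm.map σ).transpose) ^ k) * (ym ^ k) := by rw [mul_assoc]
      _ = ym ^ k := by rw [hda, one_mul]
  rw [hgb, hb0, hc0, hak, hdk, hXm, stmt8_fromBlocks_pow]
end

section
/- Let 𝔾 be a connected reductive simply connected algebraic group in characteristic p, Fr a Frobenius endomorphism, G = 𝔾^Fr, 𝕋 an Fr-stable maximal torus and T = 𝕋^Fr. Let χ ∈ Irr(G) lie above the irreducible character α of Z(G). Suppose every element of T \ Z(G) is regular (i.e. its centralizer in 𝔾 is a torus, giving C_G(g) = T), and χ(1)·|Z(G)| ≥ |T|^{3/2}. Then χ|_T contains every irreducible character of T lying above α. -/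
open scoped Classical BigOperators

/-- The (normalized) inner product of two complex-valued functions on a finite group. -/
noncomputable def charInner (G : Type*) [Group G] [Fintype G] (φ ψ : G → ℂ) : ℂ :=
  (Fintype.card G : ℂ)⁻¹ * ∑ g : G, φ g * (starRingEnd ℂ) (ψ g)

/-- `χ` is an irreducible complex character of `G`. -/
def IsIrrChar (G : Type) [Group G] (χ : G → ℂ) : Prop :=
  ∃ V : FDRep ℂ G, CategoryTheory.Simple V ∧ χ = V.character

open Module LinearMap in
lemma FDRep_conj_char {H : Type} [Group H] [Fintype H] (V : FDRep ℂ H) (g : H) :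
    (starRingEnd ℂ) (V.character g) = V.character g⁻¹ := by
  classical
  set n := orderOf g with hndef
  have hn0 : n ≠ 0 := (orderOf_pos g).ne'
  set f : Module.End ℂ V := V.ρ g with hfdef
  set f' : Module.End ℂ V := V.ρ g⁻¹ with hf'def
  have hfn : f ^ n = 1 := by
    rw [hfdef, ← map_pow, pow_orderOf_eq_one, map_one]
  have hev : ∀ μ : ℂ, f.eigenspace μ ≠ ⊥ → μ ^ n = 1 := by
    intro μ hμ
    obtain ⟨v, hv⟩ := Module.End.HasEigenvalue.exists_hasEigenvector hμ
    have h1 : (f ^ n) v = μ ^ n • v := hv.pow_apply n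
    rw [hfn] at h1
    have h2 : (μ ^ n - 1) • v = 0 := by
      rw [sub_smul, one_smul, ← h1]; simp
    rcases smul_eq_zero.mp h2 with h | h
    · exact sub_eq_zero.mp h
    · exact absurd h hv.2
  have hss : f.IsSemisimple := by
    apply Module.End.isSemisimple_of_squarefree_aeval_eq_zero
      (p := Polynomial.X ^ n - 1)
    · exact (Polynomial.X_pow_sub_one_separable_iff.mpr
        (by exact_mod_cast hn0)).squarefree
    · rw [map_sub, map_pow, Polynomial.aeval_X, map_one, hfn, sub_self]
  have hST : ⨆ μ : ℂ, f.eigenspace μ = ⊤ := by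
    have h1 := Module.End.iSup_maxGenEigenspace_eq_top f
    simp_rw [hss.isFinitelySemisimple.maxGenEigenspace_eq_eigenspace] at h1
    exact h1
  have hind := Module.End.eigenspaces_iSupIndep f
  have hInt : DirectSum.IsInternal (fun μ : ℂ => f.eigenspace μ) :=
    DirectSum.isInternal_submodule_of_iSupIndep_of_iSup_eq_top hind hST
  have hfin : {μ : ℂ | f.eigenspace μ ≠ ⊥}.Finite :=
    WellFoundedGT.finite_ne_bot_of_iSupIndep hind
  have hmf : ∀ μ : ℂ, Set.MapsTo f (f.eigenspace μ) (f.eigenspace μ) := by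
    intro μ x hx
    have hx' : f x = μ • x := Module.End.mem_eigenspace_iff.mp hx
    show f x ∈ f.eigenspace μ
    rw [hx']
    exact Submodule.smul_mem _ _ hx
  have hff' : f * f' = 1 := by
    rw [hfdef, hf'def, ← map_mul, mul_inv_cancel, map_one]
  have hf'f : f' * f = 1 := by
    rw [hfdef, hf'def, ← map_mul, inv_mul_cancel, map_one]
  have hkey : ∀ (μ : ℂ) (x : V), f x = μ • x → x = μ • f' x := by
    intro μ x hx
    have h1 : f' (f x) = μ • f' x := by rw [hx, map_smul]
    calc x = (f' * f) x := by rw [hf'f]; rfl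
      _ = μ • f' x := by rw [Module.End.mul_apply, h1]
  have hmf' : ∀ μ : ℂ, Set.MapsTo f' (f.eigenspace μ) (f.eigenspace μ) := by
    intro μ x hx
    have hx' : f x = μ • x := Module.End.mem_eigenspace_iff.mp hx
    show f' x ∈ f.eigenspace μ
    rw [Module.End.mem_eigenspace_iff]
    calc f (f' x) = (f * f') x := rfl
      _ = x := by rw [hff']; rfl
      _ = μ • f' x := hkey μ x hx'
  have htr : V.character g = ∑ μ ∈ hfin.toFinset,
      μ * (finrank ℂ (f.eigenspace μ) : ℂ) := by
    rw [show V.character g = LinearMap.trace ℂ V f from rfl,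
      LinearMap.trace_eq_sum_trace_restrict' hInt hfin hmf]
    refine Finset.sum_congr rfl fun μ _ => ?_
    have hres : f.restrict (hmf μ) = μ • (1 : Module.End ℂ (f.eigenspace μ)) := by
      ext x
      have := Module.End.mem_eigenspace_iff.mp x.2
      simp [LinearMap.restrict_coe_apply, this]
      exact this
    rw [hres, map_smul, LinearMap.trace_one, smul_eq_mul]
  have htr' : V.character g⁻¹ = ∑ μ ∈ hfin.toFinset,
      μ⁻¹ * (finrank ℂ (f.eigenspace μ) : ℂ) := by
    rw [show V.character g⁻¹ = LinearMap.trace ℂ V f' from rfl,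
      LinearMap.trace_eq_sum_trace_restrict' hInt hfin hmf']
    refine Finset.sum_congr rfl fun μ hμ => ?_
    have hμn : μ ^ n = 1 := hev μ (hfin.mem_toFinset.mp hμ)
    have hμ0 : μ ≠ 0 := by
      intro h; rw [h, zero_pow hn0] at hμn; exact zero_ne_one hμn
    have hres : f'.restrict (hmf' μ) = μ⁻¹ • (1 : Module.End ℂ (f.eigenspace μ)) := by
      ext x
      have hx' : f ↑x = μ • ↑x := Module.End.mem_eigenspace_iff.mp x.2
      have h1 : (x : V) = μ • f' ↑x := hkey μ ↑x hx'
      have h2 : f' (x : V) = μ⁻¹ • (x : V) := by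
        have h3 := congrArg (fun y => μ⁻¹ • y) h1
        simpa [smul_smul, inv_mul_cancel₀ hμ0] using h3.symm
      simp [LinearMap.restrict_coe_apply, h2]
      exact h2
    rw [hres, map_smul, LinearMap.trace_one, smul_eq_mul]
  rw [htr, htr', map_sum]
  refine Finset.sum_congr rfl fun μ hμ => ?_
  have hμn : μ ^ n = 1 := hev μ (hfin.mem_toFinset.mp hμ)
  have habs : ‖μ‖ = 1 := by
    have h1 : ‖μ‖ ^ n = 1 := by rw [← norm_pow, hμn, norm_one]
    rcases lt_trichotomy ‖μ‖ 1 with h | h | h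
    · have := pow_lt_one₀ (norm_nonneg μ) h hn0
      linarith
    · exact h
    · have := one_lt_pow₀ h hn0
      linarith
  rw [map_mul, ← Complex.inv_eq_conj habs]
  congr 1
  simp

lemma FDRep_finrank_pos {H : Type} [Group H] (W : FDRep ℂ H) [CategoryTheory.Simple W] :
    0 < Module.finrank ℂ W := by
  by_contra h
  have h0 : Module.finrank ℂ W = 0 := by omega
  have hsub : Subsingleton W := Module.finrank_zero_iff.mp h0
  haveI : Subsingleton ((CategoryTheory.forget (FGModuleCat ℂ)).obj W.V) := hsub
  apply CategoryTheory.id_nonzero W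
  ext x
  exact Subsingleton.elim _ _

lemma char_norm_sum {H : Type} [Group H] [Fintype H] (W : FDRep ℂ H) [CategoryTheory.Simple W] :
    ∑ t : H, W.character t * W.character t⁻¹ = (Fintype.card H : ℂ) := by
  have hcard : Nat.card H = Fintype.card H := Nat.card_eq_fintype_card
  have hc : ((Nat.card H : ℂ)) ≠ 0 := by rw [hcard]; exact_mod_cast Fintype.card_ne_zero
  haveI : Invertible ((Nat.card H : ℂ)) := invertibleOfNonzero hc
  have horth := FDRep.char_orthonormal (k := ℂ) (G := H) W W
  rw [if_pos ⟨CategoryTheory.Iso.refl W⟩] at horth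
  have h2 := congrArg (fun x => (Nat.card H : ℂ) * x) horth
  simp only [smul_eq_mul, ← mul_assoc] at h2
  rw [mul_inv_cancel₀ hc, one_mul] at h2
  rw [hcard] at h2
  simpa using h2

/-- formalizable core: Let `Z ≤ T ≤ G` be finite groups, `χ ∈ Irr(G)`
and `λ ∈ Irr(T)` both lying above the same linear character `α` of `Z`.  Suppose
`|χ(g)| ≤ |T|^{1/2}` for every `g ∈ T \ Z` (as holds when every such `g` is regular
with `C_G(g) = T`), and `χ(1)·|Z| ≥ |T|^{3/2}`.  Then `χ|_T` contains `λ`.  In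
particular `χ|_T` contains every irreducible character of `T` lying above `α`. -/
theorem stmt_11 {G : Type} [Group G] [Fintype G]
    (T Z : Subgroup G) (hZT : Z ≤ T)
    (χ : G → ℂ) (hχ : IsIrrChar G χ)
    (lam : ↥T → ℂ) (hlam : IsIrrChar ↥T lam)
    (α : G → ℂ) (hα1 : α 1 = 1)
    (hαmul : ∀ z ∈ Z, ∀ z' ∈ Z, α (z * z') = α z * α z')
    (hχα : ∀ z ∈ Z, χ z = χ 1 * α z)
    (hlamα : ∀ (z : G) (hz : z ∈ Z), lam ⟨z, hZT hz⟩ = lam 1 * α z)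
    (hbound : ∀ g ∈ T, g ∉ Z →
      ‖χ g‖ ≤ Real.sqrt (Fintype.card ↥T))
    (hdeg : ((Fintype.card ↥T : ℝ)) ^ ((3 : ℝ) / 2) ≤
      (χ 1).re * (Fintype.card ↥Z : ℝ)) :
    0 < (charInner ↥T (fun t => χ (t : G)) lam).re := by
  classical
  obtain ⟨V, hV, hχV⟩ := hχ
  obtain ⟨W, hW, hlamW⟩ := hlam
  haveI := hV
  haveI := hW
  set S : ℝ := (Fintype.card ↥T : ℝ) with hSdef
  have hS1 : (1 : ℝ) ≤ S := by
    rw [hSdef]; exact_mod_cast Fintype.card_pos (α := ↥T)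
  have hS0 : (0 : ℝ) < S := by linarith
  set Zc : ℝ := (Fintype.card ↥Z : ℝ) with hZcdef
  have hZc1 : (1 : ℝ) ≤ Zc := by
    rw [hZcdef]; exact_mod_cast Fintype.card_pos (α := ↥Z)
  -- α facts
  have hαpow : ∀ z ∈ Z, ∀ k : ℕ, α (z ^ k) = α z ^ k := by
    intro z hz k
    induction k with
    | zero => simpa using hα1
    | succ k ih => rw [pow_succ, pow_succ, hαmul _ (Z.pow_mem hz k) _ hz, ih]
  have hαabs : ∀ z ∈ Z, ‖α z‖ = 1 := by
    intro z hz
    have h1 : α z ^ orderOf z = 1 := by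
      rw [← hαpow z hz, pow_orderOf_eq_one, hα1]
    have h2 : ‖α z‖ ^ orderOf z = 1 := by
      rw [← norm_pow, h1, norm_one]
    have h3 : orderOf z ≠ 0 := (orderOf_pos z).ne'
    rcases lt_trichotomy (‖α z‖) 1 with h | h | h
    · have := pow_lt_one₀ (norm_nonneg _) h h3
      linarith
    · exact h
    · have := one_lt_pow₀ h h3
      linarith
  have hαconj : ∀ z ∈ Z, α z * (starRingEnd ℂ) (α z) = 1 := by
    intro z hz
    rw [Complex.mul_conj, ← Complex.sq_norm, hαabs z hz]
    norm_num
  -- degrees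
  set m : ℕ := Module.finrank ℂ W with hmdef
  have hlam1 : lam 1 = (m : ℂ) := by rw [hlamW, hmdef]; exact_mod_cast FDRep.char_one W
  have hm1 : (1 : ℝ) ≤ (m : ℝ) := by exact_mod_cast FDRep_finrank_pos W
  have hdV0 : 0 ≤ (χ 1).re := by
    rw [hχV, FDRep.char_one]
    simp
  have hlamZ : ∀ t : ↥T, (t : G) ∈ Z → lam t = (m : ℂ) * α ↑t := by
    intro t ht
    have h1 := hlamα ↑t ht
    have h2 : (⟨↑t, hZT ht⟩ : ↥T) = t := Subtype.ext rfl
    rw [h2] at h1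
    rw [h1, hlam1]
  -- the subset A of T corresponding to Z
  set A : Finset ↥T := Finset.univ.filter (fun t : ↥T => (t : G) ∈ Z) with hAdef
  have hAmem : ∀ t : ↥T, t ∈ A ↔ (t : G) ∈ Z := by
    intro t; simp [hAdef]
  have hAcard : (A.card : ℝ) = Zc := by
    have h1 : A.card = Fintype.card {t : ↥T // (t : G) ∈ Z} := by
      rw [Fintype.card_subtype]
    have e : {t : ↥T // (t : G) ∈ Z} ≃ ↥Z :=
      { toFun := fun t => ⟨↑↑t, t.2⟩
        invFun := fun z => ⟨⟨↑z, hZT z.2⟩, z.2⟩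
        left_inv := fun t => Subtype.ext (Subtype.ext rfl)
        right_inv := fun z => Subtype.ext rfl }
    rw [h1, Fintype.card_congr e, hZcdef]
  -- main term
  have hA_sum : ∑ t ∈ A, χ ↑t * (starRingEnd ℂ) (lam t) = (A.card : ℂ) * (χ 1 * (m : ℂ)) := by
    have hterm : ∀ t ∈ A, χ ↑t * (starRingEnd ℂ) (lam t) = χ 1 * (m : ℂ) := by
      intro t ht
      have htZ := (hAmem t).mp ht
      rw [hχα ↑t htZ, hlamZ t htZ, map_mul, map_natCast]
      calc (χ 1 * α ↑t) * ((m : ℂ) * (starRingEnd ℂ) (α ↑t))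
          = (χ 1 * (m : ℂ)) * (α ↑t * (starRingEnd ℂ) (α ↑t)) := by ring
        _ = χ 1 * (m : ℂ) := by rw [hαconj ↑t htZ, mul_one]
    rw [Finset.sum_congr rfl hterm, Finset.sum_const, nsmul_eq_mul]
  -- sums of squares
  have htot : ∑ t : ↥T, ‖lam t‖ ^ 2 = S := by
    have h1 : ∑ t : ↥T, lam t * (starRingEnd ℂ) (lam t) = (Fintype.card ↥T : ℂ) := by
      rw [hlamW]
      calc ∑ t : ↥T, W.character t * (starRingEnd ℂ) (W.character t)
          = ∑ t : ↥T, W.character t * W.character t⁻¹ :=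
            Finset.sum_congr rfl fun t _ => by rw [FDRep_conj_char]
        _ = _ := char_norm_sum W
    have h2 : ((∑ t : ↥T, ‖lam t‖ ^ 2 : ℝ) : ℂ) = (((Fintype.card ↥T : ℝ)) : ℂ) := by
      push_cast
      rw [← h1]
      refine Finset.sum_congr rfl fun t _ => ?_
      rw [← Complex.ofReal_pow, Complex.sq_norm, Complex.mul_conj]
    rw [hSdef]
    exact_mod_cast h2
  have hAsq : ∑ t ∈ A, ‖lam t‖ ^ 2 = (m : ℝ) ^ 2 * (A.card : ℝ) := by
    have hterm : ∀ t ∈ A, ‖lam t‖ ^ 2 = (m : ℝ) ^ 2 := by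
      intro t ht
      have htZ := (hAmem t).mp ht
      rw [hlamZ t htZ, norm_mul, hαabs _ htZ, mul_one, Complex.norm_natCast]
    rw [Finset.sum_congr rfl hterm, Finset.sum_const, nsmul_eq_mul, mul_comm]
  have hcomp_sq : ∑ t ∈ Aᶜ, ‖lam t‖ ^ 2 = S - (m : ℝ) ^ 2 * Zc := by
    have h1 := Finset.sum_add_sum_compl A (fun t : ↥T => ‖lam t‖ ^ 2)
    rw [htot, hAsq, hAcard] at h1
    linarith
  have hm2Zc : (1 : ℝ) ≤ (m : ℝ) ^ 2 * Zc := by nlinarith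
  have hcomp_sq_le : ∑ t ∈ Aᶜ, ‖lam t‖ ^ 2 ≤ S - 1 := by
    rw [hcomp_sq]; linarith
  have hAcard_le : A.card ≤ Fintype.card ↥T := A.card_le_univ
  have hcompcard : ((Aᶜ : Finset ↥T).card : ℝ) ≤ S - 1 := by
    rw [Finset.card_compl, Nat.cast_sub hAcard_le, ← hSdef, hAcard]
    linarith
  -- Cauchy–Schwarz
  have hsum_abs : ∑ t ∈ Aᶜ, ‖lam t‖ ≤ S - 1 := by
    have hcs := sq_sum_le_card_mul_sum_sq (s := (Aᶜ : Finset ↥T))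
      (f := fun t : ↥T => ‖lam t‖)
    have hnn : (0 : ℝ) ≤ ∑ t ∈ Aᶜ, ‖lam t‖ :=
      Finset.sum_nonneg fun t _ => norm_nonneg _
    have hsqnn : (0 : ℝ) ≤ ∑ t ∈ Aᶜ, ‖lam t‖ ^ 2 :=
      Finset.sum_nonneg fun t _ => sq_nonneg _
    have hS1' : (0 : ℝ) ≤ S - 1 := by linarith
    have hsq : (∑ t ∈ Aᶜ, ‖lam t‖) ^ 2 ≤ (S - 1) ^ 2 := by
      calc (∑ t ∈ Aᶜ, ‖lam t‖) ^ 2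
          ≤ ((Aᶜ : Finset ↥T).card : ℝ) * ∑ t ∈ Aᶜ, ‖lam t‖ ^ 2 := hcs
        _ ≤ (S - 1) * (S - 1) := mul_le_mul hcompcard hcomp_sq_le hsqnn hS1'
        _ = (S - 1) ^ 2 := by ring
    have h3 := Real.sqrt_le_sqrt hsq
    rwa [Real.sqrt_sq hnn, Real.sqrt_sq hS1'] at h3
  -- error bound
  have herr : ‖∑ t ∈ Aᶜ, χ ↑t * (starRingEnd ℂ) (lam t)‖
      ≤ Real.sqrt S * (S - 1) := by
    have h1 : ∀ t ∈ (Aᶜ : Finset ↥T), ‖χ ↑t * (starRingEnd ℂ) (lam t)‖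
        ≤ Real.sqrt S * ‖lam t‖ := by
      intro t ht
      have htZ : (t : G) ∉ Z := by
        have := Finset.mem_compl.mp ht
        simpa [hAdef] using this
      rw [norm_mul, Complex.norm_conj]
      refine mul_le_mul_of_nonneg_right ?_ (norm_nonneg _)
      exact hbound ↑t t.2 htZ
    calc ‖∑ t ∈ Aᶜ, χ ↑t * (starRingEnd ℂ) (lam t)‖
        ≤ ∑ t ∈ Aᶜ, ‖χ ↑t * (starRingEnd ℂ) (lam t)‖ :=
          norm_sum_le _ _
      _ ≤ ∑ t ∈ Aᶜ, Real.sqrt S * ‖lam t‖ := Finset.sum_le_sum h1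
      _ = Real.sqrt S * ∑ t ∈ Aᶜ, ‖lam t‖ := by rw [Finset.mul_sum]
      _ ≤ Real.sqrt S * (S - 1) :=
          mul_le_mul_of_nonneg_left hsum_abs (Real.sqrt_nonneg S)
  -- assemble
  have hsplit := Finset.sum_add_sum_compl A (fun t : ↥T => χ ↑t * (starRingEnd ℂ) (lam t))
  have hw : 0 < (∑ t : ↥T, χ ↑t * (starRingEnd ℂ) (lam t)).re := by
    rw [← hsplit, Complex.add_re]
    have hmain : (∑ t ∈ A, χ ↑t * (starRingEnd ℂ) (lam t)).re
        = (A.card : ℝ) * ((χ 1).re * (m : ℝ)) := by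
      rw [hA_sum]
      simp [Complex.mul_re]
    have herr' : -(Real.sqrt S * (S - 1)) ≤ (∑ t ∈ Aᶜ, χ ↑t * (starRingEnd ℂ) (lam t)).re := by
      have h1 := Complex.abs_re_le_norm (∑ t ∈ Aᶜ, χ ↑t * (starRingEnd ℂ) (lam t))
      have h2 := abs_le.mp (le_trans h1 herr)
      exact h2.1
    have hsqS : Real.sqrt S * Real.sqrt S = S := Real.mul_self_sqrt hS0.le
    have hsq1 : 1 ≤ Real.sqrt S := by
      rw [show (1 : ℝ) = Real.sqrt 1 by simp]
      exact Real.sqrt_le_sqrt hS1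
    have h32 : S ^ ((3 : ℝ) / 2) = S * Real.sqrt S := by
      rw [show (3 : ℝ) / 2 = 1 + 1 / 2 by norm_num, Real.rpow_add hS0, Real.rpow_one,
        ← Real.sqrt_eq_rpow]
    rw [h32] at hdeg
    have hstep : S * Real.sqrt S ≤ Zc * ((χ 1).re * (m : ℝ)) := by
      calc S * Real.sqrt S ≤ (χ 1).re * Zc := hdeg
        _ = Zc * ((χ 1).re * 1) := by ring
        _ ≤ Zc * ((χ 1).re * (m : ℝ)) := by
            refine mul_le_mul_of_nonneg_left ?_ (by linarith)
            exact mul_le_mul_of_nonneg_left hm1 hdV0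
    have hexp : Real.sqrt S * (S - 1) = S * Real.sqrt S - Real.sqrt S := by ring
    have hsqpos : 0 < Real.sqrt S := Real.sqrt_pos.mpr hS0
    rw [hmain, hAcard]
    linarith
  rw [charInner]
  have hre : (((Fintype.card ↥T : ℂ))⁻¹ * ∑ t : ↥T, χ ↑t * (starRingEnd ℂ) (lam t)).re
      = S⁻¹ * (∑ t : ↥T, χ ↑t * (starRingEnd ℂ) (lam t)).re := by
    have hc : ((Fintype.card ↥T : ℂ))⁻¹ = ((S⁻¹ : ℝ) : ℂ) := by
      rw [hSdef]
      push_cast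
      ring
    rw [hc, Complex.re_ofReal_mul]
  rw [hre]
  exact mul_pos (inv_pos.mpr hS0) hw
end

section
/- Let G be a finite group of Lie type with Steinberg character St, and let χ be an irreducible character of G = 𝔾^Fr (𝔾 simply connected). Then [χ·St, St]_G = Σ_{(𝕋)} [χ|_T, 1_T]_T / |W(T)|, where the sum ranges over representatives of G-conjugacy classes of Fr-stable maximal tori 𝕋 of 𝔾, T = 𝕋^Fr, and W(T) = (N_𝔾(𝕋)/𝕋)^Fr. Consequently, χ is a constituent of St² if and only if [χ|_T, 1_T]_T > 0 for some maximal torus T. -/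
open scoped Classical BigOperators

/-- The average over a subgroup of an irreducible character restricted to that subgroup is a
natural number (the dimension of the invariants of the restricted representation). -/
lemma aux_avg_nat {G : Type} [Group G] [Fintype G] (V : FDRep ℂ G) (S : Subgroup G) :
    ∃ n : ℕ, (Fintype.card ↥S : ℂ)⁻¹ * ∑ t : ↥S, V.character ↑t = n := by
  have hcard : (Fintype.card ↥S : ℂ) ≠ 0 := Nat.cast_ne_zero.2 Fintype.card_ne_zero
  have : Invertible (Fintype.card ↥S : ℂ) := invertibleOfNonzero hcard
  refine ⟨Module.finrank ℂ (Representation.invariants (FDRep.of (V.ρ.comp S.subtype)).ρ), ?_⟩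
  have h := FDRep.average_char_eq_finrank_invariants (FDRep.of (V.ρ.comp S.subtype))
  rw [Nat.card_eq_fintype_card] at h
  have hchar : ∀ t : ↥S, (FDRep.of (V.ρ.comp S.subtype)).character t = V.character ↑t :=
    fun t => rfl
  simpa [hchar] using h

/-- Key "Frobenius reciprocity" computation: the averaged pairing of a class function against
the permutation-character of a subgroup equals its average over the subgroup. -/
lemma aux_key {G : Type} [Group G] [Fintype G] (f : G → ℂ)
    (hcls : ∀ x g : G, f (x * g * x⁻¹) = f g) (S : Subgroup G) :
    (Fintype.card G : ℂ)⁻¹ * ∑ g : G, f g *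
        ((Fintype.card ↥S : ℂ)⁻¹ * ∑ x : G, (if x * g * x⁻¹ ∈ S then (1 : ℂ) else 0))
      = (Fintype.card ↥S : ℂ)⁻¹ * ∑ t : ↥S, f ↑t := by
  have hG : (Fintype.card G : ℂ) ≠ 0 := Nat.cast_ne_zero.2 Fintype.card_ne_zero
  have step1 : ∀ x : G, ∑ g : G, f g * (if x * g * x⁻¹ ∈ S then (1 : ℂ) else 0)
      = ∑ h : G, f h * (if h ∈ S then (1 : ℂ) else 0) := by
    intro x
    refine Fintype.sum_equiv ((Equiv.mulLeft x).trans (Equiv.mulRight x⁻¹)) _ _ fun g => ?_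
    simp only [Equiv.trans_apply, Equiv.coe_mulLeft, Equiv.coe_mulRight]
    rw [hcls x g]
    rfl
  have step2 : ∑ h : G, f h * (if h ∈ S then (1 : ℂ) else 0) = ∑ t : ↥S, f ↑t := by
    simp only [mul_ite, mul_one, mul_zero]
    rw [← Finset.sum_filter]
    exact Finset.sum_subtype _ (by simp) _
  calc (Fintype.card G : ℂ)⁻¹ * ∑ g : G, f g *
        ((Fintype.card ↥S : ℂ)⁻¹ * ∑ x : G, (if x * g * x⁻¹ ∈ S then (1 : ℂ) else 0))
      = (Fintype.card G : ℂ)⁻¹ * ((Fintype.card ↥S : ℂ)⁻¹ *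
          ∑ x : G, ∑ g : G, f g * (if x * g * x⁻¹ ∈ S then (1 : ℂ) else 0)) := by
        have expand : ∀ g : G, f g * ((Fintype.card ↥S : ℂ)⁻¹ *
            ∑ x : G, (if x * g * x⁻¹ ∈ S then (1 : ℂ) else 0))
            = (Fintype.card ↥S : ℂ)⁻¹ * ∑ x : G, f g * (if x * g * x⁻¹ ∈ S then (1 : ℂ) else 0) := by
          intro g
          rw [mul_left_comm, Finset.mul_sum]
        simp only [expand]
        rw [← Finset.mul_sum, Finset.sum_comm]
    _ = (Fintype.card G : ℂ)⁻¹ * ((Fintype.card ↥S : ℂ)⁻¹ *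
          ∑ x : G, ∑ t : ↥S, f ↑t) := by
        congr 1; congr 1
        exact Finset.sum_congr rfl fun x _ => (step1 x).trans step2
    _ = (Fintype.card ↥S : ℂ)⁻¹ * ∑ t : ↥S, f ↑t := by
        rw [Finset.sum_const, Finset.card_univ, nsmul_eq_mul]
        field_simp

/-- Let `G` be a finite group of Lie type with (real-valued) Steinberg
character `St`, and suppose the Deligne–Lusztig formula
`St·St = Σ_{(𝕋)} (1/|W(T)|)·Ind_T^G(1_T)` holds, the sum ranging over a family of
(representatives of classes of) maximal tori `T i` with Weyl-group multiplicities
`W i > 0`.  Then for any irreducible character `χ` of `G`: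
`[χ·St, St] = Σ_i [χ|_{T i}, 1]/(W i)`, and consequently `χ` is a constituent of
`St²` if and only if `[χ|_T, 1_T] > 0` for some torus `T` in the family. -/
theorem stmt_12 {G : Type} [Group G] [Fintype G]
    (ι : Type) [Fintype ι] (T : ι → Subgroup G) (W : ι → ℕ) (hW : ∀ i, 0 < W i)
    (St χ : G → ℂ) (hSt : IsIrrChar G St) (hχ : IsIrrChar G χ)
    (hStreal : ∀ g : G, (starRingEnd ℂ) (St g) = St g)
    (hDL : ∀ g : G, St g * St g = ∑ i : ι, (W i : ℂ)⁻¹ *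
      ((Fintype.card ↥(T i) : ℂ)⁻¹ * ∑ x : G, (if x * g * x⁻¹ ∈ T i then (1 : ℂ) else 0))) :
    charInner G (fun g => χ g * St g) St =
      (∑ i : ι, (W i : ℂ)⁻¹ * charInner ↥(T i) (fun t => χ (t : G)) (fun _ => 1)) ∧
    (0 < (charInner G (fun g => St g * St g) χ).re ↔
      ∃ i : ι, 0 < (charInner ↥(T i) (fun t => χ (t : G)) (fun _ => 1)).re) := by
  obtain ⟨V, -, hV⟩ := hχ
  -- χ is a class function
  have hcls : ∀ x g : G, χ (x * g * x⁻¹) = χ g := by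
    intro x g
    rw [hV, mul_assoc, FDRep.char_mul_comm, mul_assoc, inv_mul_cancel, mul_one]
  have hclsc : ∀ x g : G, (starRingEnd ℂ) (χ (x * g * x⁻¹)) = (starRingEnd ℂ) (χ g) :=
    fun x g => by rw [hcls]
  -- each torus inner product is a natural number n i
  have hn : ∀ i : ι, ∃ n : ℕ,
      charInner ↥(T i) (fun t => χ (t : G)) (fun _ => 1) = (n : ℂ) := by
    intro i
    obtain ⟨n, hn⟩ := aux_avg_nat V (T i)
    refine ⟨n, ?_⟩
    simp only [charInner, map_one, mul_one]
    rw [← hn, hV]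
  choose n hni using hn
  -- main equality
  have hmain : charInner G (fun g => χ g * St g) St =
      ∑ i : ι, (W i : ℂ)⁻¹ * charInner ↥(T i) (fun t => χ (t : G)) (fun _ => 1) := by
    have : charInner G (fun g => χ g * St g) St
        = (Fintype.card G : ℂ)⁻¹ * ∑ g : G, χ g * (St g * St g) := by
      simp only [charInner, hStreal, mul_assoc]
    rw [this]
    have : ∀ g : G, χ g * (St g * St g) = ∑ i : ι, (W i : ℂ)⁻¹ * (χ g *
        ((Fintype.card ↥(T i) : ℂ)⁻¹ * ∑ x : G, (if x * g * x⁻¹ ∈ T i then (1 : ℂ) else 0))) := by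
      intro g
      rw [hDL g, Finset.mul_sum]
      exact Finset.sum_congr rfl fun i _ => by ring
    simp only [this]
    rw [Finset.sum_comm, Finset.mul_sum]
    refine Finset.sum_congr rfl fun i _ => ?_
    rw [← Finset.mul_sum, mul_left_comm, aux_key χ hcls (T i)]
    congr 1
    simp only [charInner, map_one, mul_one]
  refine ⟨hmain, ?_⟩
  -- second inner product computation
  have hsecond : charInner G (fun g => St g * St g) χ = ∑ i : ι, (W i : ℂ)⁻¹ * (n i : ℂ) := by
    have : charInner G (fun g => St g * St g) χ = ∑ i : ι, (W i : ℂ)⁻¹ *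
        ((Fintype.card ↥(T i) : ℂ)⁻¹ * ∑ t : ↥(T i), (starRingEnd ℂ) (χ ↑t)) := by
      simp only [charInner]
      have h1 : ∀ g : G, St g * St g * (starRingEnd ℂ) (χ g)
          = ∑ i : ι, (W i : ℂ)⁻¹ * ((starRingEnd ℂ) (χ g) *
            ((Fintype.card ↥(T i) : ℂ)⁻¹ *
              ∑ x : G, (if x * g * x⁻¹ ∈ T i then (1 : ℂ) else 0))) := by
        intro g
        rw [hDL g, Finset.sum_mul]
        exact Finset.sum_congr rfl fun i _ => by ring
      simp only [h1]
      rw [Finset.sum_comm, Finset.mul_sum]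
      refine Finset.sum_congr rfl fun i _ => ?_
      rw [← Finset.mul_sum, mul_left_comm,
        aux_key (fun g => (starRingEnd ℂ) (χ g)) hclsc (T i)]
    rw [this]
    refine Finset.sum_congr rfl fun i _ => ?_
    congr 1
    have := hni i
    simp only [charInner, map_one, mul_one] at this
    calc (Fintype.card ↥(T i) : ℂ)⁻¹ * ∑ t : ↥(T i), (starRingEnd ℂ) (χ ↑t)
        = (starRingEnd ℂ) ((Fintype.card ↥(T i) : ℂ)⁻¹ * ∑ t : ↥(T i), χ ↑t) := by
          rw [map_mul, map_sum]
          congr 1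
          rw [map_inv₀, Complex.conj_natCast]
      _ = (n i : ℂ) := by rw [this, Complex.conj_natCast]
  -- positivity
  rw [hsecond]
  have hre : (∑ i : ι, (W i : ℂ)⁻¹ * (n i : ℂ)).re = ∑ i : ι, (W i : ℝ)⁻¹ * (n i : ℝ) := by
    rw [Complex.re_sum]
    refine Finset.sum_congr rfl fun i _ => ?_
    have : ((W i : ℂ))⁻¹ * (n i : ℂ) = (((W i : ℝ)⁻¹ * (n i : ℝ) : ℝ) : ℂ) := by push_cast; ring
    rw [this, Complex.ofReal_re]
  rw [hre]
  constructor
  · intro hpos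
    by_contra hcon
    push_neg at hcon
    have hzero : ∀ i : ι, (n i : ℝ) = 0 := by
      intro i
      have := hcon i
      rw [hni i] at this
      simp only [Complex.natCast_re] at this
      have : (n i : ℝ) ≤ 0 := this
      exact le_antisymm this (Nat.cast_nonneg _)
    have : ∑ i : ι, (W i : ℝ)⁻¹ * (n i : ℝ) = 0 := by
      refine Finset.sum_eq_zero fun i _ => by rw [hzero i, mul_zero]
    rw [this] at hpos
    exact lt_irrefl 0 hpos
  · rintro ⟨i, hi⟩
    rw [hni i] at hi
    simp only [Complex.natCast_re] at hi
    refine Finset.sum_pos' (fun j _ => ?_) ⟨i, Finset.mem_univ i, ?_⟩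
    · positivity
    · have hWi : (0 : ℝ) < (W i : ℝ)⁻¹ := by
        have := hW i; positivity
      exact mul_pos hWi hi
end

section
/- (Solomon's observation) Let G be a finite group with character table (χ_i(g_j)) where g_j run over class representatives. For each irreducible character χ of G, the multiplicity [π_G, χ]_G of χ in the conjugation permutation character π_G of G equals Σ_j χ(g_j), the sum of the entries of the row of the character table corresponding to χ. In particular, this row sum is a nonnegative integer. -/
open scoped Classical BigOperators
open CategoryTheory.MonoidalCategory

section Aux

variable {G : Type} [Group G] [Fintype G]

/-- The fixed-point count of conjugation by `g` is the cardinality of the stabilizer of `g`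
under the conjugation action. -/
lemma aux_fix_card_eq_stab (g : G) :
    Nat.card {x : G // g * x * g⁻¹ = x} =
      Nat.card (MulAction.stabilizer (ConjAct G) g) := by
  apply Nat.card_congr
  refine Equiv.subtypeEquiv (ConjAct.toConjAct (G := G)).toEquiv fun x => ?_
  simp only [MulEquiv.toEquiv_eq_coe, EquivLike.coe_coe, MulAction.mem_stabilizer_iff,
    ConjAct.toConjAct_smul]
  rw [mul_inv_eq_iff_eq_mul, mul_inv_eq_iff_eq_mul]
  exact eq_comm

/-- Orbit–stabilizer for the conjugation action, phrased with fixed points and carriers. -/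
lemma aux_orbit_stab (g : G) :
    Nat.card {x : G // g * x * g⁻¹ = x} * Nat.card (ConjClasses.mk g).carrier =
      Fintype.card G := by
  rw [aux_fix_card_eq_stab, ← ConjAct.orbit_eq_carrier_conjClasses, mul_comm,
    Nat.card_eq_fintype_card, Nat.card_eq_fintype_card,
    MulAction.card_orbit_mul_card_stabilizer_eq_card_group (ConjAct G) g]
  exact Fintype.card_congr (ConjAct.ofConjAct (G := G)).toEquiv

lemma aux_mk_out (c : ConjClasses G) : ConjClasses.mk (Quotient.out c) = c :=
  Quotient.out_eq c

/-- Averaging a class function against the conjugation permutation character gives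
the sum over class representatives. -/
lemma aux_class_sum (f : G → ℂ) (hf : ∀ g h : G, f (h * g * h⁻¹) = f g) :
    ∑ g : G, (Nat.card {x : G // g * x * g⁻¹ = x} : ℂ) * f g =
      (Fintype.card G : ℂ) * ∑ c : ConjClasses G, f (Quotient.out c) := by
  rw [← Fintype.sum_fiberwise (ConjClasses.mk (α := G))
    (fun g => (Nat.card {x : G // g * x * g⁻¹ = x} : ℂ) * f g), Finset.mul_sum]
  refine Finset.sum_congr rfl fun c _ => ?_
  have hne : (Nat.card c.carrier : ℂ) ≠ 0 := by
    have h := aux_orbit_stab (Quotient.out c)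
    rw [aux_mk_out] at h
    have h0 : Nat.card c.carrier ≠ 0 := by
      intro h0
      rw [h0, mul_zero] at h
      exact Fintype.card_ne_zero h.symm
    exact_mod_cast h0
  have key : ∀ a : {g : G // ConjClasses.mk g = c},
      ((Nat.card {x : G // (a : G) * x * (a : G)⁻¹ = x} : ℂ) * f (a : G)) =
        (Fintype.card G : ℂ) / (Nat.card c.carrier : ℂ) * f (Quotient.out c) := by
    rintro ⟨a, ha⟩
    have hconj : IsConj (Quotient.out c) a := by
      rw [← ConjClasses.mk_eq_mk_iff_isConj, aux_mk_out, ha]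
    obtain ⟨h, hh⟩ := isConj_iff.mp hconj
    have hfa : f a = f (Quotient.out c) := by rw [← hh, hf]
    have hκ : (Nat.card {x : G // a * x * a⁻¹ = x} : ℂ) =
        (Fintype.card G : ℂ) / (Nat.card c.carrier : ℂ) := by
      have h2 := aux_orbit_stab a
      rw [ha] at h2
      rw [eq_div_iff hne]
      exact_mod_cast h2
    simp only [hκ, hfa]
  calc ∑ a : {g : G // ConjClasses.mk g = c},
        (Nat.card {x : G // (a : G) * x * (a : G)⁻¹ = x} : ℂ) * f (a : G)
      = ∑ _a : {g : G // ConjClasses.mk g = c},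
          (Fintype.card G : ℂ) / (Nat.card c.carrier : ℂ) * f (Quotient.out c) :=
        Finset.sum_congr rfl fun a _ => key a
    _ = (Fintype.card {g : G // ConjClasses.mk g = c} : ℂ) *
          ((Fintype.card G : ℂ) / (Nat.card c.carrier : ℂ) * f (Quotient.out c)) := by
        rw [Finset.sum_const, Finset.card_univ, nsmul_eq_mul]
    _ = (Fintype.card G : ℂ) * f (Quotient.out c) := by
        have hcount : (Fintype.card {g : G // ConjClasses.mk g = c} : ℂ) =
            (Nat.card c.carrier : ℂ) := by
          have : Fintype.card {g : G // ConjClasses.mk g = c} = Nat.card c.carrier := by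
            rw [Nat.card_eq_fintype_card]
            exact Fintype.card_congr
              (Equiv.subtypeEquivRight fun a => ConjClasses.mem_carrier_iff_mk_eq.symm)
          exact_mod_cast this
        rw [hcount]
        field_simp

/-- The conjugation permutation representation of `G` on `ℂ[G]`. -/
noncomputable def conjRep (G : Type) [Group G] [Fintype G] : FDRep ℂ G :=
  FDRep.of ((Representation.ofMulAction ℂ (ConjAct G) G).comp
    (ConjAct.toConjAct (G := G)).toMonoidHom)

lemma conjRep_char (g : G) :
    (conjRep G).character g = (Nat.card {x : G // g * x * g⁻¹ = x} : ℂ) := by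
  classical
  have : (conjRep G).character g =
      LinearMap.trace ℂ (MonoidAlgebra ℂ G)
        ((Representation.ofMulAction ℂ (ConjAct G) G) (ConjAct.toConjAct g)) := rfl
  rw [this, LinearMap.trace_eq_matrix_trace ℂ (MonoidAlgebra.basis G ℂ),
    Matrix.trace]
  have hdiag : ∀ x : G,
      (LinearMap.toMatrix (MonoidAlgebra.basis G ℂ) (MonoidAlgebra.basis G ℂ)
        ((Representation.ofMulAction ℂ (ConjAct G) G) (ConjAct.toConjAct g))).diag x =
      if g * x * g⁻¹ = x then (1 : ℂ) else 0 := by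
    intro x
    rw [Matrix.diag, LinearMap.toMatrix_apply]
    simp only [MonoidAlgebra.basis_apply, Representation.ofMulAction_single]
    change (MonoidAlgebra.single _ _ : MonoidAlgebra ℂ G).coeff x = _
    rw [MonoidAlgebra.coeff_single, Finsupp.single_apply]
    simp [ConjAct.toConjAct_smul]
    exact if_congr Iff.rfl rfl rfl
  rw [Finset.sum_congr rfl fun x _ => hdiag x]
  rw [Finset.sum_boole, Nat.card_eq_fintype_card, Fintype.card_subtype]


end Aux

/-- Solomon's observation: For each irreducible character `χ` of a
finite group `G`, the multiplicity `[π_G, χ]` of `χ` in the conjugation permutation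
character `π_G` (with `π_G g = |C_G(g)|`) equals the sum of the entries of the row of
the character table corresponding to `χ`, i.e. `Σ_j χ(g_j)` over class
representatives `g_j`.  In particular this row sum is a nonnegative integer. -/
theorem stmt_15 {G : Type} [Group G] [Fintype G]
    (χ : G → ℂ) (hχ : IsIrrChar G χ)
    (π : G → ℂ) (hπ : ∀ g : G, π g = (Nat.card {x : G // g * x * g⁻¹ = x} : ℂ)) :
    charInner G π χ = (∑ c : ConjClasses G, χ (Quotient.out c)) ∧
    ∃ k : ℕ, (∑ c : ConjClasses G, χ (Quotient.out c)) = (k : ℂ) := by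
  classical
  obtain ⟨V, hV, hχV⟩ := hχ
  haveI := hV
  have hc0 : (Fintype.card G : ℂ) ≠ 0 := by exact_mod_cast Fintype.card_ne_zero
  haveI : Invertible (Fintype.card G : ℂ) := invertibleOfNonzero hc0
  have hclass : ∀ g h : G, χ (h * g * h⁻¹) = χ g := by
    intro g h; rw [hχV]; exact FDRep.char_conj V g h
  have hπinv : ∀ g : G, π g⁻¹ = π g := by
    intro g
    rw [hπ, hπ]
    congr 1
    apply Nat.card_congr
    refine Equiv.subtypeEquivRight fun x => ?_
    rw [inv_inv, mul_assoc, inv_mul_eq_iff_eq_mul, mul_inv_eq_iff_eq_mul]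
    exact eq_comm
  have hπ_char : ∀ g : G, (conjRep G).character g = π g := fun g => by
    rw [hπ, conjRep_char]
  have h3 : ∑ g : G, π g * χ g =
      (Fintype.card G : ℂ) * ∑ c : ConjClasses G, χ (Quotient.out c) := by
    simp only [hπ]
    exact aux_class_sum χ hclass
  have h2 : ∑ g : G, π g * χ g⁻¹ = ∑ g : G, π g * χ g := by
    rw [← Equiv.sum_comp (Equiv.inv G) (fun g => π g * χ g)]
    refine Finset.sum_congr rfl fun g _ => ?_
    simp only [Equiv.inv_apply]
    rw [hπinv]
  have key := FDRep.average_char_eq_finrank_invariants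
    (conjRep G ⊗ FDRep.of (Representation.dual V.ρ))
  have h1 : ∑ g : G, (conjRep G ⊗ FDRep.of (Representation.dual V.ρ)).character g =
      ∑ g : G, π g * χ g⁻¹ := by
    refine Finset.sum_congr rfl fun g _ => ?_
    rw [FDRep.char_tensor, Pi.mul_apply, FDRep.char_dual, hπ_char, hχV]
  rw [h1, h2, h3, Nat.card_eq_fintype_card,
    inv_mul_cancel_left₀ hc0] at key
  refine ⟨?_, ⟨_, key⟩⟩
  have hconj : charInner G π χ =
      (starRingEnd ℂ) ((Fintype.card G : ℂ)⁻¹ * ∑ g : G, π g * χ g) := by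
    rw [charInner, map_mul, map_inv₀, map_natCast, map_sum]
    congr 1
    refine Finset.sum_congr rfl fun g _ => ?_
    rw [map_mul]
    congr 1
    rw [hπ, map_natCast]
  rw [hconj, h3, inv_mul_cancel_left₀ hc0, key, map_natCast, ← key]
end

section
/- Let q be a prime power and T₁ the maximal torus of U_n(q) (n odd) consisting of elements g_{i,j} = diag(a^i, a^{−qi}, b^j, b^{−qj}, …, b^{q^{n−3} j}) where a, b have orders q²−1 and q^{n−2}+1 respectively with a^{q−1} = b^{(q^{n−2}+1)/(q+1)}. Let ω^k_{n,q} be the irreducible Weil characters, given by ω^k_{n,q}(h) = ((−1)^n/(q+1)) Σ_{l=0}^{q} γ^{kl} (−q)^{dim Ker(h − c^l)}, where c = a^{q−1} and γ is a fixed complex (q+1)-th root of unity compatible with the construction. Let λ_{s,t} ∈ Irr(T₁) be given by λ_{s,t}(g_{i,j}) = α^{si} β^{tj}. Then λ_{s,t} is a constituent of ω^k_{n,q}|_{T₁} precisely when k ≡ s+t (mod q+1) and t ≢ 0 (mod q^{n−2}+1); and in that case the multiplicity is 1 if s ≠ 0 and 2 if s = 0. -/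
open scoped Classical BigOperators

private lemma sum_pow_eq_ite (z : ℂ) (N : ℕ) (hz : z ^ N = 1) :
    ∑ i ∈ Finset.range N, z ^ i = if z = 1 then (N : ℂ) else 0 := by
  split_ifs with h
  · simp [h]
  · rw [geom_sum_eq h N, hz]
    simp

private lemma sum_spike (N i0 : ℕ) (hi0 : i0 < N) (c : ℂ) (x : ℕ → ℂ) :
    ∑ i ∈ Finset.range N, (if i = i0 then c else 1) * x i
      = (∑ i ∈ Finset.range N, x i) + (c - 1) * x i0 := by
  have h : ∀ i, (if i = i0 then c else 1) * x i
      = x i + (if i = i0 then (c - 1) * x i0 else 0) := by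
    intro i
    split_ifs with h
    · subst h; ring
    · ring
  simp_rw [h]
  rw [Finset.sum_add_distrib, Finset.sum_ite_eq' (Finset.range N) i0 (fun _ => (c - 1) * x i0),
    if_pos (Finset.mem_range.2 hi0)]

private lemma triple_sum (N1 N2 M : ℕ) (F G : ℕ → ℕ → ℂ) :
    ∑ i ∈ Finset.range N1, ∑ j ∈ Finset.range N2, ∑ l ∈ Finset.range M, F i l * G j l
      = ∑ l ∈ Finset.range M,
          (∑ i ∈ Finset.range N1, F i l) * (∑ j ∈ Finset.range N2, G j l) := by
  calc ∑ i ∈ Finset.range N1, ∑ j ∈ Finset.range N2, ∑ l ∈ Finset.range M, F i l * G j l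
      = ∑ i ∈ Finset.range N1, ∑ l ∈ Finset.range M, ∑ j ∈ Finset.range N2, F i l * G j l :=
        Finset.sum_congr rfl fun i _ => Finset.sum_comm
    _ = ∑ l ∈ Finset.range M, ∑ i ∈ Finset.range N1, ∑ j ∈ Finset.range N2, F i l * G j l :=
        Finset.sum_comm
    _ = _ := Finset.sum_congr rfl fun l _ => (Finset.sum_mul_sum _ _ _ _).symm

/-- With `T₁` the maximal torus of `U_n(q)` (`n` odd) of order
`(q²−1)(q^{n−2}+1)`, parametrized by `g_{i,j}`, the irreducible Weil character
`ω^k_{n,q}` restricted to `T₁` and the linear character `λ_{s,t}(g_{i,j}) = α^{si}β^{tj}`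
satisfy: `λ_{s,t}` is a constituent of `ω^k_{n,q}|_{T₁}` precisely when
`k ≡ s + t (mod q+1)` and `t ≢ 0`, with multiplicity `1` if `s ≠ 0` and `2` if
`s = 0`. -/
theorem stmt_17 (q n : ℕ) (hq : ∃ p f : ℕ, p.Prime ∧ 0 < f ∧ q = p ^ f)
    (hn : 3 ≤ n) (hodd : Odd n)
    (q1 q2 : ℕ) (hq1 : q1 = q - 1) (hq2 : q2 = (q ^ (n - 2) + 1) / (q + 1))
    (α β γ : ℂ) (hα : IsPrimitiveRoot α (q ^ 2 - 1))
    (hβ : IsPrimitiveRoot β (q ^ (n - 2) + 1))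
    (hγ1 : γ = α ^ q1) (hγ2 : γ = β ^ q2)
    (dimKer : ℕ → ℕ → ℕ → ℕ)
    (hdim : ∀ i j l : ℕ, dimKer i j l =
      (if q1 ∣ i ∧ i / q1 = l then 2 else 0) +
      (if q2 ∣ j ∧ j / q2 = l then n - 2 else 0))
    (ω : ℕ → ℕ → ℕ → ℂ)
    (hω : ∀ k i j : ℕ, ω k i j =
      ((-1 : ℂ) ^ n / ((q : ℂ) + 1)) *
        ∑ l ∈ Finset.range (q + 1), γ ^ (k * l) * (-(q : ℂ)) ^ dimKer i j l)
    (s t k : ℕ) (hs : s < q ^ 2 - 1) (ht : t < q ^ (n - 2) + 1) (hk : k < q + 1) :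
    (((q ^ 2 - 1) * (q ^ (n - 2) + 1) : ℕ) : ℂ)⁻¹ *
        ∑ i ∈ Finset.range (q ^ 2 - 1), ∑ j ∈ Finset.range (q ^ (n - 2) + 1),
          ω k i j * (starRingEnd ℂ) (α ^ (s * i) * β ^ (t * j)) =
      if k = (s + t) % (q + 1) ∧ t ≠ 0 then (if s = 0 then 2 else 1) else 0 := by
  -- ## basic numeric facts
  have hq2le : 2 ≤ q := by
    obtain ⟨p, pf, hp, hpf, rfl⟩ := hq
    calc 2 ≤ p := hp.two_le
      _ ≤ p ^ pf := Nat.le_self_pow (by omega) p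
  have hmpos : 0 < q + 1 := by omega
  have hQ1 : q ^ 2 - 1 = q1 * (q + 1) := by
    rw [hq1]
    have h := Nat.sq_sub_sq q 1
    rw [one_pow] at h
    rw [h, Nat.mul_comm]
  have hq1pos : 0 < q1 := by omega
  have hQ1pos : 0 < q ^ 2 - 1 := by rw [hQ1]; positivity
  have he : Odd (n - 2) := by
    obtain ⟨w, hw⟩ := hodd
    exact ⟨w - 1, by omega⟩
  have hdvd : (q + 1) ∣ q ^ (n - 2) + 1 := by
    simpa using he.nat_add_dvd_pow_add_pow q 1
  have hQ2 : q ^ (n - 2) + 1 = q2 * (q + 1) := by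
    rw [hq2]; exact (Nat.div_mul_cancel hdvd).symm
  have hQ2pos : 0 < q ^ (n - 2) + 1 := Nat.succ_pos _
  have hq2pos : 0 < q2 := by
    rcases Nat.eq_zero_or_pos q2 with h | h
    · rw [h, zero_mul] at hQ2; exact absurd hQ2 (Nat.succ_ne_zero _)
    · exact h
  -- ## root of unity facts
  have hαpow : α ^ (q ^ 2 - 1) = 1 := hα.pow_eq_one
  have hβpow : β ^ (q ^ (n - 2) + 1) = 1 := hβ.pow_eq_one
  have hγprim : IsPrimitiveRoot γ (q + 1) := by
    rw [hγ1]; exact hα.pow hQ1pos hQ1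
  have hγm : γ ^ (q + 1) = 1 := hγprim.pow_eq_one
  have hγ0 : γ ≠ 0 := by
    intro h
    rw [h, zero_pow (by omega : q + 1 ≠ 0)] at hγm
    exact zero_ne_one hγm
  have hγconj : (starRingEnd ℂ) γ = γ⁻¹ := by
    have h1 : ‖γ‖ = 1 := Complex.norm_eq_one_of_pow_eq_one hγm (by omega)
    exact (Complex.inv_eq_conj h1).symm
  have hδm : ((starRingEnd ℂ) γ) ^ (q + 1) = 1 := by
    rw [← map_pow, hγm, map_one]
  have hzpow : ∀ u : ℕ, (γ ^ k * ((starRingEnd ℂ) γ) ^ u) ^ (q + 1) = 1 := by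
    intro u
    rw [mul_pow, ← pow_mul, ← pow_mul, mul_comm k, mul_comm u, pow_mul, pow_mul, hγm, hδm,
      one_pow, one_pow, one_mul]
  have hziff : ∀ u : ℕ, γ ^ k * ((starRingEnd ℂ) γ) ^ u = 1 ↔ k = u % (q + 1) := by
    intro u
    rw [hγconj, inv_pow, mul_inv_eq_one₀ (pow_ne_zero u hγ0)]
    have hmod : γ ^ u = γ ^ (u % (q + 1)) := by
      conv_lhs => rw [← Nat.div_add_mod u (q + 1)]
      rw [pow_add, pow_mul, hγm, one_pow, one_mul]
    rw [hmod]
    constructor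
    · exact fun h => hγprim.pow_inj hk (Nat.mod_lt u hmpos) h
    · rintro rfl; rfl
  have hkey : ∀ u : ℕ, ∑ l ∈ Finset.range (q + 1),
      γ ^ (k * l) * ((starRingEnd ℂ) γ) ^ (u * l)
      = if k = u % (q + 1) then ((q : ℂ) + 1) else 0 := by
    intro u
    have h1 : ∀ l, γ ^ (k * l) * ((starRingEnd ℂ) γ) ^ (u * l)
        = (γ ^ k * ((starRingEnd ℂ) γ) ^ u) ^ l := by
      intro l
      rw [mul_pow, pow_mul, pow_mul]
    simp_rw [h1]
    rw [sum_pow_eq_ite _ _ (hzpow u), if_congr (hziff u) rfl rfl]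
    split_ifs <;> push_cast <;> ring
  -- ## basic exponential sums
  have hsumA : ∑ i ∈ Finset.range (q ^ 2 - 1), ((starRingEnd ℂ) α) ^ (s * i)
      = if s = 0 then ((q ^ 2 - 1 : ℕ) : ℂ) else 0 := by
    have h1 : ∑ i ∈ Finset.range (q ^ 2 - 1), α ^ (s * i)
        = if s = 0 then ((q ^ 2 - 1 : ℕ) : ℂ) else 0 := by
      have h2 : ∀ i, α ^ (s * i) = (α ^ s) ^ i := fun i => pow_mul α s i
      simp_rw [h2]
      rw [sum_pow_eq_ite _ _ (by rw [← pow_mul, mul_comm, pow_mul, hαpow, one_pow])]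
      refine if_congr ?_ rfl rfl
      rw [hα.pow_eq_one_iff_dvd]
      exact ⟨fun h => Nat.eq_zero_of_dvd_of_lt h hs, fun h => h ▸ dvd_zero _⟩
    calc ∑ i ∈ Finset.range (q ^ 2 - 1), ((starRingEnd ℂ) α) ^ (s * i)
        = (starRingEnd ℂ) (∑ i ∈ Finset.range (q ^ 2 - 1), α ^ (s * i)) := by
          rw [map_sum]
          exact Finset.sum_congr rfl fun i _ => (map_pow _ _ _).symm
      _ = _ := by rw [h1]; split_ifs <;> simp
  have hsumB : ∑ j ∈ Finset.range (q ^ (n - 2) + 1), ((starRingEnd ℂ) β) ^ (t * j)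
      = if t = 0 then ((q ^ (n - 2) + 1 : ℕ) : ℂ) else 0 := by
    have h1 : ∑ j ∈ Finset.range (q ^ (n - 2) + 1), β ^ (t * j)
        = if t = 0 then ((q ^ (n - 2) + 1 : ℕ) : ℂ) else 0 := by
      have h2 : ∀ j, β ^ (t * j) = (β ^ t) ^ j := fun j => pow_mul β t j
      simp_rw [h2]
      rw [sum_pow_eq_ite _ _ (by rw [← pow_mul, mul_comm, pow_mul, hβpow, one_pow])]
      refine if_congr ?_ rfl rfl
      rw [hβ.pow_eq_one_iff_dvd]
      exact ⟨fun h => Nat.eq_zero_of_dvd_of_lt h ht, fun h => h ▸ dvd_zero _⟩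
    calc ∑ j ∈ Finset.range (q ^ (n - 2) + 1), ((starRingEnd ℂ) β) ^ (t * j)
        = (starRingEnd ℂ) (∑ j ∈ Finset.range (q ^ (n - 2) + 1), β ^ (t * j)) := by
          rw [map_sum]
          exact Finset.sum_congr rfl fun j _ => (map_pow _ _ _).symm
      _ = _ := by rw [h1]; split_ifs <;> simp
  have hAδ : ∀ l u : ℕ, ((starRingEnd ℂ) α) ^ (u * (q1 * l)) = ((starRingEnd ℂ) γ) ^ (u * l) := by
    intro l u
    rw [← map_pow, ← map_pow, hγ1, ← pow_mul]
    congr 2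
    ring
  have hBδ : ∀ l u : ℕ, ((starRingEnd ℂ) β) ^ (u * (q2 * l)) = ((starRingEnd ℂ) γ) ^ (u * l) := by
    intro l u
    rw [← map_pow, ← map_pow, hγ2, ← pow_mul]
    congr 2
    ring
  -- ## inner sums
  have hEi : ∀ l ∈ Finset.range (q + 1),
      (∑ i ∈ Finset.range (q ^ 2 - 1),
        (-(q : ℂ)) ^ (if q1 ∣ i ∧ i / q1 = l then 2 else 0) * ((starRingEnd ℂ) α) ^ (s * i))
      = ((q ^ 2 - 1 : ℕ) : ℂ) *
          ((if s = 0 then 1 else 0) + ((starRingEnd ℂ) γ) ^ (s * l)) := by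
    intro l hl
    rw [Finset.mem_range] at hl
    have hcond : ∀ i : ℕ, (q1 ∣ i ∧ i / q1 = l) ↔ i = q1 * l := by
      intro i
      constructor
      · rintro ⟨⟨c, rfl⟩, h2⟩
        rw [Nat.mul_div_cancel_left c hq1pos] at h2
        rw [h2]
      · rintro rfl
        exact ⟨Dvd.intro l rfl, Nat.mul_div_cancel_left l hq1pos⟩
    have hterm : ∀ i : ℕ, (-(q : ℂ)) ^ (if q1 ∣ i ∧ i / q1 = l then 2 else 0)
        = if i = q1 * l then (q : ℂ) ^ 2 else 1 := by
      intro i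
      rw [if_congr (hcond i) rfl rfl]
      split_ifs
      · ring
      · exact pow_zero _
    simp_rw [hterm]
    have hlt : q1 * l < q ^ 2 - 1 := by
      rw [hQ1]
      have h' := Nat.mul_le_mul_left q1 (Nat.succ_le_of_lt hl)
      rw [Nat.mul_succ] at h'
      omega
    rw [sum_spike _ _ hlt ((q : ℂ) ^ 2) (fun i => ((starRingEnd ℂ) α) ^ (s * i)), hsumA, hAδ l s]
    have hcast : ((q ^ 2 - 1 : ℕ) : ℂ) = (q : ℂ) ^ 2 - 1 := by
      rw [Nat.cast_sub (by nlinarith : 1 ≤ q ^ 2)]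
      push_cast
      ring
    rw [hcast, mul_add]
    congr 1
    split_ifs <;> ring
  have hEj : ∀ l ∈ Finset.range (q + 1),
      (∑ j ∈ Finset.range (q ^ (n - 2) + 1),
        γ ^ (k * l) * ((-(q : ℂ)) ^ (if q2 ∣ j ∧ j / q2 = l then n - 2 else 0) *
          ((starRingEnd ℂ) β) ^ (t * j)))
      = ((q ^ (n - 2) + 1 : ℕ) : ℂ) * γ ^ (k * l) *
          ((if t = 0 then 1 else 0) - ((starRingEnd ℂ) γ) ^ (t * l)) := by
    intro l hl
    rw [Finset.mem_range] at hl
    have hcond : ∀ j : ℕ, (q2 ∣ j ∧ j / q2 = l) ↔ j = q2 * l := by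
      intro j
      constructor
      · rintro ⟨⟨c, rfl⟩, h2⟩
        rw [Nat.mul_div_cancel_left c hq2pos] at h2
        rw [h2]
      · rintro rfl
        exact ⟨Dvd.intro l rfl, Nat.mul_div_cancel_left l hq2pos⟩
    have hterm : ∀ j : ℕ, (-(q : ℂ)) ^ (if q2 ∣ j ∧ j / q2 = l then n - 2 else 0)
        = if j = q2 * l then -((q : ℂ) ^ (n - 2)) else 1 := by
      intro j
      rw [if_congr (hcond j) rfl rfl]
      split_ifs
      · exact he.neg_pow _
      · exact pow_zero _
    simp_rw [hterm]
    rw [← Finset.mul_sum]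
    have hlt : q2 * l < q ^ (n - 2) + 1 := by
      rw [hQ2]
      have h' := Nat.mul_le_mul_left q2 (Nat.succ_le_of_lt hl)
      rw [Nat.mul_succ] at h'
      omega
    rw [sum_spike _ _ hlt (-((q : ℂ) ^ (n - 2))) (fun j => ((starRingEnd ℂ) β) ^ (t * j)),
      hsumB, hBδ l t]
    have hcast : ((q ^ (n - 2) + 1 : ℕ) : ℂ) = (q : ℂ) ^ (n - 2) + 1 := by
      push_cast
      ring
    rw [hcast]
    split_ifs <;> ring
  -- ## main reshaping
  have hmain : (∑ i ∈ Finset.range (q ^ 2 - 1), ∑ j ∈ Finset.range (q ^ (n - 2) + 1),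
      ω k i j * (starRingEnd ℂ) (α ^ (s * i) * β ^ (t * j)))
      = ((-1 : ℂ) ^ n / ((q : ℂ) + 1)) * ∑ l ∈ Finset.range (q + 1),
          (∑ i ∈ Finset.range (q ^ 2 - 1),
            (-(q : ℂ)) ^ (if q1 ∣ i ∧ i / q1 = l then 2 else 0) *
              ((starRingEnd ℂ) α) ^ (s * i)) *
          (∑ j ∈ Finset.range (q ^ (n - 2) + 1),
            γ ^ (k * l) * ((-(q : ℂ)) ^ (if q2 ∣ j ∧ j / q2 = l then n - 2 else 0) *
              ((starRingEnd ℂ) β) ^ (t * j))) := by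
    have hterm : ∀ i j, ω k i j * (starRingEnd ℂ) (α ^ (s * i) * β ^ (t * j))
        = ((-1 : ℂ) ^ n / ((q : ℂ) + 1)) * ∑ l ∈ Finset.range (q + 1),
            ((-(q : ℂ)) ^ (if q1 ∣ i ∧ i / q1 = l then 2 else 0) *
              ((starRingEnd ℂ) α) ^ (s * i)) *
            (γ ^ (k * l) * ((-(q : ℂ)) ^ (if q2 ∣ j ∧ j / q2 = l then n - 2 else 0) *
              ((starRingEnd ℂ) β) ^ (t * j))) := by
      intro i j
      rw [hω k i j, map_mul, map_pow, map_pow]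
      simp_rw [hdim, pow_add]
      rw [mul_assoc, Finset.sum_mul]
      congr 1
      refine Finset.sum_congr rfl fun l _ => ?_
      ring
    refine Eq.trans (Finset.sum_congr rfl fun i _ => Finset.sum_congr rfl fun j _ => hterm i j) ?_
    rw [← triple_sum, Finset.mul_sum]
    refine Finset.sum_congr rfl fun i _ => ?_
    rw [Finset.mul_sum]
  rw [hmain]
  have hstep2 : (∑ l ∈ Finset.range (q + 1),
      (∑ i ∈ Finset.range (q ^ 2 - 1),
        (-(q : ℂ)) ^ (if q1 ∣ i ∧ i / q1 = l then 2 else 0) *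
          ((starRingEnd ℂ) α) ^ (s * i)) *
      (∑ j ∈ Finset.range (q ^ (n - 2) + 1),
        γ ^ (k * l) * ((-(q : ℂ)) ^ (if q2 ∣ j ∧ j / q2 = l then n - 2 else 0) *
          ((starRingEnd ℂ) β) ^ (t * j))))
      = ((q ^ 2 - 1 : ℕ) : ℂ) * ((q ^ (n - 2) + 1 : ℕ) : ℂ) *
          ∑ l ∈ Finset.range (q + 1),
            γ ^ (k * l) * ((if s = 0 then 1 else 0) + ((starRingEnd ℂ) γ) ^ (s * l)) *
              ((if t = 0 then 1 else 0) - ((starRingEnd ℂ) γ) ^ (t * l)) := by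
    rw [Finset.mul_sum]
    refine Finset.sum_congr rfl fun l hl => ?_
    rw [hEi l hl, hEj l hl]
    ring
  rw [hstep2, hodd.neg_one_pow]
  have hQ1c : ((q ^ 2 - 1 : ℕ) : ℂ) ≠ 0 := Nat.cast_ne_zero.2 hQ1pos.ne'
  have hQ2c : ((q ^ (n - 2) + 1 : ℕ) : ℂ) ≠ 0 := Nat.cast_ne_zero.2 hQ2pos.ne'
  have hqc : ((q : ℂ) + 1) ≠ 0 := by
    have h : ((q : ℂ) + 1) = ((q + 1 : ℕ) : ℂ) := by push_cast; ring
    rw [h]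
    exact Nat.cast_ne_zero.2 (by omega)
  rw [Nat.cast_mul]
  have hconst : (((q ^ 2 - 1 : ℕ) : ℂ) * ((q ^ (n - 2) + 1 : ℕ) : ℂ))⁻¹ *
      ((-1 : ℂ) / ((q : ℂ) + 1) *
        (((q ^ 2 - 1 : ℕ) : ℂ) * ((q ^ (n - 2) + 1 : ℕ) : ℂ) *
          ∑ l ∈ Finset.range (q + 1),
            γ ^ (k * l) * ((if s = 0 then 1 else 0) + ((starRingEnd ℂ) γ) ^ (s * l)) *
              ((if t = 0 then 1 else 0) - ((starRingEnd ℂ) γ) ^ (t * l))))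
      = -(((q : ℂ) + 1)⁻¹) *
          ∑ l ∈ Finset.range (q + 1),
            γ ^ (k * l) * ((if s = 0 then 1 else 0) + ((starRingEnd ℂ) γ) ^ (s * l)) *
              ((if t = 0 then 1 else 0) - ((starRingEnd ℂ) γ) ^ (t * l)) := by
    have hgen : ∀ a b S : ℂ, a ≠ 0 → b ≠ 0 → a⁻¹ * ((-1 : ℂ) / b * (a * S)) = -(b⁻¹) * S := by
      intro a b S ha hb
      field_simp
    exact hgen _ _ _ (mul_ne_zero hQ1c hQ2c) hqc
  rw [hconst]
  -- ## final case analysis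
  by_cases ht0 : t = 0
  · subst ht0
    have hzero : ∀ l ∈ Finset.range (q + 1),
        γ ^ (k * l) * ((if s = 0 then (1 : ℂ) else 0) + ((starRingEnd ℂ) γ) ^ (s * l)) *
          ((if (0 : ℕ) = 0 then (1 : ℂ) else 0) - ((starRingEnd ℂ) γ) ^ (0 * l)) = 0 := by
      intro l _
      simp
    rw [Finset.sum_eq_zero hzero, mul_zero]
    simp
  · by_cases hs0 : s = 0
    · subst hs0
      have h1 : ∀ l ∈ Finset.range (q + 1),
          γ ^ (k * l) * ((if (0 : ℕ) = 0 then (1 : ℂ) else 0) +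
            ((starRingEnd ℂ) γ) ^ (0 * l)) *
            ((if t = 0 then (1 : ℂ) else 0) - ((starRingEnd ℂ) γ) ^ (t * l))
          = (-2) * (γ ^ (k * l) * ((starRingEnd ℂ) γ) ^ (t * l)) := by
        intro l _
        rw [if_pos rfl, if_neg ht0, zero_mul, pow_zero]
        ring
      rw [Finset.sum_congr rfl h1, ← Finset.mul_sum, hkey t]
      by_cases hkt : k = t % (q + 1)
      · rw [if_pos hkt, if_pos ⟨by rw [zero_add]; exact hkt, ht0⟩, if_pos rfl]
        field_simp
      · rw [if_neg hkt, if_neg (by rw [zero_add]; exact fun h => hkt h.1)]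
        ring
    · have h1 : ∀ l ∈ Finset.range (q + 1),
          γ ^ (k * l) * ((if s = 0 then (1 : ℂ) else 0) + ((starRingEnd ℂ) γ) ^ (s * l)) *
            ((if t = 0 then (1 : ℂ) else 0) - ((starRingEnd ℂ) γ) ^ (t * l))
          = (-1) * (γ ^ (k * l) * ((starRingEnd ℂ) γ) ^ ((s + t) * l)) := by
        intro l _
        rw [if_neg hs0, if_neg ht0, add_mul s t l, pow_add]
        ring
      rw [Finset.sum_congr rfl h1, ← Finset.mul_sum, hkey (s + t)]
      by_cases hkt : k = (s + t) % (q + 1)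
      · rw [if_pos hkt, if_pos ⟨hkt, ht0⟩, if_neg hs0]
        field_simp
      · rw [if_neg hkt, if_neg (fun h => hkt h.1)]
        ring
end
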